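/- arXiv:1302.5598 — 8 statements merged into one kernel-verified Lean document; each statement's English description precedes it below -/
import Mathlib

section
/- Let Γ be the free group on a set S. For c ∈ Γ let |c| denote the length of the reduced word representing c. Fix n ∈ ℕ and suppose g : Γ → ℂ is finitely supported with support contained in {c ∈ Γ : |c| = n}. Then for every finitely supported f : Γ → ℂ one has ‖f*g‖₂ ≤ (n+1)·‖f‖₂·‖g‖₂. -/
open List

namespace Haagerup

variable {S : Type*} [DecidableEq S]

/-- A word is reduced: no adjacent cancelling pair. -/
def Rd (L : List (S × Bool)) : Prop :=
  List.Chain' (fun a b => ¬(a.1 = b.1 ∧ a.2 = !b.2)) L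

lemma rd_reduce (L : List (S × Bool)) : Rd (FreeGroup.reduce L) := by
  induction L with
  | nil => simp [Rd, List.Chain']
  | cons x L ih =>
    rw [FreeGroup.reduce.cons]
    rcases h : FreeGroup.reduce L with _ | ⟨hd, tl⟩
    · simp [Rd, List.Chain']
    · rw [h] at ih
      show Rd (if x.1 = hd.1 ∧ x.2 = !hd.2 then tl else x :: hd :: tl)
      by_cases hc : x.1 = hd.1 ∧ x.2 = !hd.2
      · rw [if_pos hc]; exact ih.tail
      · rw [if_neg hc]
        exact List.isChain_cons_cons.2 ⟨hc, ih⟩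

lemma reduce_eq_self_of_rd {L : List (S × Bool)} (h : Rd L) : FreeGroup.reduce L = L := by
  induction L with
  | nil => rfl
  | cons x L ih =>
    have ht : FreeGroup.reduce L = L := ih h.tail
    rw [FreeGroup.reduce.cons, ht]
    rcases L with _ | ⟨hd, tl⟩
    · rfl
    · have : ¬(x.1 = hd.1 ∧ x.2 = !hd.2) := (List.isChain_cons_cons.1 h).1
      simp [this]

lemma rd_toWord (x : FreeGroup S) : Rd x.toWord := by
  rw [← FreeGroup.reduce_toWord]; exact rd_reduce _

lemma toWord_mk_of_rd {L : List (S × Bool)} (h : Rd L) : (FreeGroup.mk L).toWord = L := by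
  rw [FreeGroup.toWord_mk, reduce_eq_self_of_rd h]

lemma invRev_append_single (u : List (S × Bool)) (x : S × Bool) :
    FreeGroup.invRev (u ++ [x]) = (x.1, !x.2) :: FreeGroup.invRev u := by
  simp [FreeGroup.invRev]

lemma main_cancel : ∀ (L₂ L₁ : List (S × Bool)), Rd L₁ → Rd L₂ →
    ∃ p u s, L₁ = p ++ u ∧ L₂ = FreeGroup.invRev u ++ s ∧ Rd (p ++ s) := by
  intro L₂
  induction L₂ with
  | nil =>
    intro L₁ h1 _
    exact ⟨L₁, [], [], by simp, by simp [FreeGroup.invRev], by simpa using h1⟩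
  | cons y t ih =>
    intro L₁ h1 h2
    rcases eq_or_ne L₁ [] with rfl | hne
    · exact ⟨[], [], y :: t, rfl, by simp [FreeGroup.invRev], h2⟩
    · set x := L₁.getLast hne with hx
      by_cases hc : x.1 = y.1 ∧ x.2 = !y.2
      · have hL₁ : L₁ = L₁.dropLast ++ [x] := (List.dropLast_append_getLast hne).symm
        have h1' : Rd L₁.dropLast := h1.prefix (List.dropLast_prefix _)
        obtain ⟨p, u', s, e1, e2, e3⟩ := ih L₁.dropLast h1' h2.tail
        refine ⟨p, u' ++ [x], s, ?_, ?_, e3⟩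
        · rw [hL₁, e1, List.append_assoc]
        · rw [invRev_append_single]
          have hxy : ((x.1 : S), !x.2) = y := by
            obtain ⟨hc1, hc2⟩ := hc
            ext
            · exact hc1
            · rw [hc2]; simp
          rw [hxy, List.cons_append, ← e2]
      · refine ⟨L₁, [], y :: t, by simp, by simp [FreeGroup.invRev], ?_⟩
        simp only [Rd, List.Chain']; rw [List.isChain_append]
        refine ⟨h1, h2, ?_⟩
        intro a ha b hb
        rw [List.getLast?_eq_getLast hne, Option.mem_def, Option.some_inj] at ha
        simp only [List.head?_cons, Option.mem_def, Option.some_inj] at hb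
        subst ha; subst hb
        exact hc

/-- Cancellation in a free group: writing `x`, `y`, `x*y` as reduced words,
`x = p ++ u`, `y = u⁻¹ ++ s`, `x*y = p ++ s`. -/
lemma decomp (x y : FreeGroup S) : ∃ p u s,
    x.toWord = p ++ u ∧ y.toWord = FreeGroup.invRev u ++ s ∧ (x * y).toWord = p ++ s := by
  obtain ⟨p, u, s, e1, e2, e3⟩ := main_cancel y.toWord x.toWord (rd_toWord x) (rd_toWord y)
  refine ⟨p, u, s, e1, e2, ?_⟩
  have hxy : x * y = FreeGroup.mk (p ++ s) := by
    conv_lhs => rw [← FreeGroup.mk_toWord (x := x), ← FreeGroup.mk_toWord (x := y), e1, e2]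
    rw [← FreeGroup.mul_mk, ← FreeGroup.mul_mk, ← FreeGroup.mul_mk, ← FreeGroup.inv_mk]
    group
  rw [hxy, toWord_mk_of_rd e3]

/-- word length -/
abbrev len (x : FreeGroup S) : ℕ := x.toWord.length

/-- cancellation amount -/
def kf (a b : FreeGroup S) : ℕ := (len a + len b - len (a * b)) / 2

lemma kf_spec (a b : FreeGroup S) : ∃ p u s,
    a.toWord = p ++ u ∧ b.toWord = FreeGroup.invRev u ++ s ∧ (a * b).toWord = p ++ s ∧
    kf a b = u.length ∧ len a = p.length + u.length ∧ len b = u.length + s.length ∧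
    len (a * b) = p.length + s.length := by
  obtain ⟨p, u, s, e1, e2, e3⟩ := decomp a b
  have l1 : len a = p.length + u.length := by rw [len, e1, List.length_append]
  have l2 : len b = u.length + s.length := by
    rw [len, e2, List.length_append, FreeGroup.invRev_length]
  have l3 : len (a * b) = p.length + s.length := by rw [len, e3, List.length_append]
  exact ⟨p, u, s, e1, e2, e3, by rw [kf, l1, l2, l3]; omega, l1, l2, l3⟩


/-- Two-term Minkowski inequality for finite sums. -/
lemma mink2 {ι : Type*} (s : Finset ι) (x y : ι → ℝ) (hx : ∀ c, 0 ≤ x c) (hy : ∀ c, 0 ≤ y c) :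
    Real.sqrt (∑ c ∈ s, (x c + y c) ^ 2) ≤
      Real.sqrt (∑ c ∈ s, x c ^ 2) + Real.sqrt (∑ c ∈ s, y c ^ 2) := by
  set A := Real.sqrt (∑ c ∈ s, x c ^ 2) with hA
  set B := Real.sqrt (∑ c ∈ s, y c ^ 2) with hB
  have hA0 : 0 ≤ A := Real.sqrt_nonneg _
  have hB0 : 0 ≤ B := Real.sqrt_nonneg _
  have hA2 : A ^ 2 = ∑ c ∈ s, x c ^ 2 := Real.sq_sqrt (Finset.sum_nonneg fun _ _ => sq_nonneg _)
  have hB2 : B ^ 2 = ∑ c ∈ s, y c ^ 2 := Real.sq_sqrt (Finset.sum_nonneg fun _ _ => sq_nonneg _)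
  have hxy : ∑ c ∈ s, x c * y c ≤ A * B := by
    have h1 : (∑ c ∈ s, x c * y c) ^ 2 ≤ (∑ c ∈ s, x c ^ 2) * ∑ c ∈ s, y c ^ 2 :=
      Finset.sum_mul_sq_le_sq_mul_sq s x y
    have h2 : 0 ≤ ∑ c ∈ s, x c * y c :=
      Finset.sum_nonneg fun c _ => mul_nonneg (hx c) (hy c)
    calc ∑ c ∈ s, x c * y c = Real.sqrt ((∑ c ∈ s, x c * y c) ^ 2) := (Real.sqrt_sq h2).symm
      _ ≤ Real.sqrt ((∑ c ∈ s, x c ^ 2) * ∑ c ∈ s, y c ^ 2) := Real.sqrt_le_sqrt h1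
      _ = A * B := by
        rw [Real.sqrt_mul (Finset.sum_nonneg fun _ _ => sq_nonneg _)]
  have key : ∑ c ∈ s, (x c + y c) ^ 2 ≤ (A + B) ^ 2 := by
    have : ∑ c ∈ s, (x c + y c) ^ 2
        = (∑ c ∈ s, x c ^ 2) + 2 * (∑ c ∈ s, x c * y c) + ∑ c ∈ s, y c ^ 2 := by
      rw [Finset.mul_sum, ← Finset.sum_add_distrib, ← Finset.sum_add_distrib]
      exact Finset.sum_congr rfl fun c _ => by ring
    nlinarith [hxy]
  calc Real.sqrt (∑ c ∈ s, (x c + y c) ^ 2) ≤ Real.sqrt ((A + B) ^ 2) := Real.sqrt_le_sqrt key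
    _ = A + B := Real.sqrt_sq (by positivity)

/-- Minkowski's inequality for finite families of nonnegative functions. -/
lemma sqrt_sum_sq_sum_le {ι κ : Type*} (s : Finset ι) (t : Finset κ) (F : κ → ι → ℝ)
    (hF : ∀ k c, 0 ≤ F k c) :
    Real.sqrt (∑ c ∈ s, (∑ k ∈ t, F k c) ^ 2) ≤ ∑ k ∈ t, Real.sqrt (∑ c ∈ s, F k c ^ 2) := by
  induction t using Finset.cons_induction with
  | empty => simp
  | cons a t ha ih =>
    simp only [Finset.sum_cons]
    calc Real.sqrt (∑ c ∈ s, (F a c + ∑ k ∈ t, F k c) ^ 2)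
        ≤ Real.sqrt (∑ c ∈ s, F a c ^ 2) + Real.sqrt (∑ c ∈ s, (∑ k ∈ t, F k c) ^ 2) :=
          mink2 s _ _ (fun c => hF a c) (fun c => Finset.sum_nonneg fun k _ => hF k c)
      _ ≤ _ := by exact add_le_add_right ih _


end Haagerup

/-- The ℓ²-norm of a finitely supported function, viewed as an element of the
monoid algebra (so that multiplication is convolution). -/
noncomputable def l2norm {Γ : Type*} (f : MonoidAlgebra ℂ Γ) : ℝ :=
  Real.sqrt (∑ c ∈ f.coeff.support, ‖f.coeff c‖ ^ 2)

set_option maxHeartbeats 1000000 in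
open Haagerup Finset in
/-- Haagerup's inequality for the free group on a set `S`: if `g` is supported on
reduced words of length `n`, then `‖f * g‖₂ ≤ (n+1) ‖f‖₂ ‖g‖₂`. -/
theorem haagerup_inequality_free_group {S : Type*} [DecidableEq S] (n : ℕ)
    (g : MonoidAlgebra ℂ (FreeGroup S))
    (hg : ∀ c ∈ g.coeff.support, (FreeGroup.toWord c).length = n)
    (f : MonoidAlgebra ℂ (FreeGroup S)) :
    l2norm (f * g) ≤ (n + 1 : ℝ) * l2norm f * l2norm g := by
  classical
  letI : DecidableEq (FreeGroup S) := Classical.decEq _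
  letI : DecidableEq ℂ := Classical.decEq _
  set T := (f * g).coeff.support with hT
  set Nf := ∑ a ∈ f.coeff.support, ‖f.coeff a‖ ^ 2 with hNf
  set Ng := ∑ b ∈ g.coeff.support, ‖g.coeff b‖ ^ 2 with hNg
  have hNf0 : 0 ≤ Nf := Finset.sum_nonneg fun _ _ => sq_nonneg _
  have hNg0 : 0 ≤ Ng := Finset.sum_nonneg fun _ _ => sq_nonneg _
  -- convolution formula
  have hconv : ∀ c, (f * g).coeff c = ∑ b ∈ g.coeff.support, f.coeff (c * b⁻¹) * g.coeff b := by
    intro c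
    rw [MonoidAlgebra.coeff_mul_apply_right]
    rfl
  set H : ℕ → FreeGroup S → ℂ := fun k c =>
    ∑ b ∈ g.coeff.support.filter (fun b => kf (c * b⁻¹) b = k), f.coeff (c * b⁻¹) * g.coeff b with hH
  have hkle : ∀ c : FreeGroup S, ∀ b ∈ g.coeff.support, kf (c * b⁻¹) b ∈ Finset.range (n + 1) := by
    intro c b hb
    obtain ⟨p, u, s, _, _, _, hku, _, hlb, _⟩ := kf_spec (c * b⁻¹) b
    have hn : len b = n := hg b hb
    rw [Finset.mem_range]
    omega
  have hsplit : ∀ c, (f * g).coeff c = ∑ k ∈ Finset.range (n + 1), H k c := by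
    intro c
    rw [hconv c, ← Finset.sum_fiberwise_of_maps_to (hkle c) (fun b => f.coeff (c * b⁻¹) * g.coeff b)]
  -- Minkowski step
  have hmink : l2norm (f * g) ≤
      ∑ k ∈ Finset.range (n + 1), Real.sqrt (∑ c ∈ T, ‖H k c‖ ^ 2) := by
    have h1 : l2norm (f * g) ≤
        Real.sqrt (∑ c ∈ T, (∑ k ∈ Finset.range (n + 1), ‖H k c‖) ^ 2) := by
      apply Real.sqrt_le_sqrt
      apply Finset.sum_le_sum
      intro c _
      have hle : ‖(f * g).coeff c‖ ≤ ∑ k ∈ Finset.range (n + 1), ‖H k c‖ := by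
        rw [hsplit c]; exact norm_sum_le _ _
      exact pow_le_pow_left₀ (norm_nonneg _) hle 2
    exact h1.trans (sqrt_sum_sq_sum_le T (Finset.range (n + 1))
      (fun k c => ‖H k c‖) (fun _ _ => norm_nonneg _))
  -- per-k bound
  have hperk : ∀ k ∈ Finset.range (n + 1),
      Real.sqrt (∑ c ∈ T, ‖H k c‖ ^ 2) ≤ l2norm f * l2norm g := by
    intro k hk
    rw [Finset.mem_range] at hk
    set π₁ : FreeGroup S → FreeGroup S := fun a => FreeGroup.mk (a.toWord.take (len a - k))
      with hπ₁
    set π₂ : FreeGroup S → FreeGroup S := fun b => FreeGroup.mk (b.toWord.drop k) with hπ₂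
    set γ₁ : FreeGroup S → FreeGroup S :=
      fun c => FreeGroup.mk (c.toWord.take (len c - (n - k))) with hγ₁
    set γ₂ : FreeGroup S → FreeGroup S :=
      fun c => FreeGroup.mk (c.toWord.drop (len c - (n - k))) with hγ₂
    set Φ : FreeGroup S → ℝ := fun x => ∑ a ∈ f.coeff.support.filter (fun a => π₁ a = x), ‖f.coeff a‖ ^ 2
      with hΦ
    set Ψ : FreeGroup S → ℝ := fun y => ∑ b ∈ g.coeff.support.filter (fun b => π₂ b = y), ‖g.coeff b‖ ^ 2
      with hΨ
    set B : FreeGroup S → Finset (FreeGroup S) := fun c =>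
      (g.coeff.support.filter (fun b => kf (c * b⁻¹) b = k)).filter (fun b => f.coeff (c * b⁻¹) ≠ 0) with hB
    have hΦ0 : ∀ x, 0 ≤ Φ x := fun x => Finset.sum_nonneg fun _ _ => sq_nonneg _
    have hΨ0 : ∀ y, 0 ≤ Ψ y := fun y => Finset.sum_nonneg fun _ _ => sq_nonneg _
    -- the key structural fact about members of `B c`
    have hbfact : ∀ c : FreeGroup S, ∀ b ∈ B c,
        π₁ (c * b⁻¹) = γ₁ c ∧ π₂ b = γ₂ c ∧ (c * b⁻¹) ∈ f.coeff.support ∧ b ∈ g.coeff.support := by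
      intro c b hbB
      rw [hB, Finset.mem_filter, Finset.mem_filter] at hbB
      obtain ⟨⟨hbg, hkb⟩, hfne⟩ := hbB
      obtain ⟨p, u, s, e1, e2, e3, hku, l1, l2, l3⟩ := kf_spec (c * b⁻¹) b
      have hab : (c * b⁻¹) * b = c := by group
      rw [hab] at e3 l3
      have hnb : len b = n := hg b hbg
      have huk : u.length = k := by omega
      have h1 : (c * b⁻¹).toWord.take (len (c * b⁻¹) - k) = p := by
        rw [e1, show len (c * b⁻¹) - k = p.length by omega]
        exact List.take_left (l₁ := p) (l₂ := u)
      have h2 : c.toWord.take (len c - (n - k)) = p := by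
        rw [e3, show len c - (n - k) = p.length by omega]
        exact List.take_left (l₁ := p) (l₂ := s)
      have h3 : b.toWord.drop k = s := by
        rw [e2, show k = (FreeGroup.invRev u).length by rw [FreeGroup.invRev_length, huk]]
        exact List.drop_left (l₂ := s)
      have h4 : c.toWord.drop (len c - (n - k)) = s := by
        rw [e3, show len c - (n - k) = p.length by omega]
        exact List.drop_left (l₁ := p) (l₂ := s)
      refine ⟨?_, ?_, Finsupp.mem_support_iff.2 hfne, hbg⟩
      · simp only [hπ₁, hγ₁]
        rw [h1, h2]
      · simp only [hπ₂, hγ₂]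
        rw [h3, h4]
    have hHB : ∀ c, H k c = ∑ b ∈ B c, f.coeff (c * b⁻¹) * g.coeff b := by
      intro c
      simp only [hH, hB]
      exact (Finset.sum_filter_of_ne (fun b _ hmul => left_ne_zero_of_mul hmul)).symm
    have hCS : ∀ c, ‖H k c‖ ^ 2 ≤ Φ (γ₁ c) * Ψ (γ₂ c) := by
      intro c
      have h1 : ‖H k c‖ ≤ ∑ b ∈ B c, ‖f.coeff (c * b⁻¹)‖ * ‖g.coeff b‖ := by
        rw [hHB c]
        refine (norm_sum_le _ _).trans (le_of_eq ?_)
        exact Finset.sum_congr rfl fun b _ => norm_mul _ _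
      have h2 : ‖H k c‖ ^ 2 ≤ (∑ b ∈ B c, ‖f.coeff (c * b⁻¹)‖ * ‖g.coeff b‖) ^ 2 :=
        pow_le_pow_left₀ (norm_nonneg _) h1 2
      have h3 : (∑ b ∈ B c, ‖f.coeff (c * b⁻¹)‖ * ‖g.coeff b‖) ^ 2 ≤
          (∑ b ∈ B c, ‖f.coeff (c * b⁻¹)‖ ^ 2) * ∑ b ∈ B c, ‖g.coeff b‖ ^ 2 :=
        Finset.sum_mul_sq_le_sq_mul_sq _ _ _
      have h4 : ∑ b ∈ B c, ‖f.coeff (c * b⁻¹)‖ ^ 2 ≤ Φ (γ₁ c) := by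
        have hinj : ∀ x ∈ B c, ∀ y ∈ B c, c * x⁻¹ = c * y⁻¹ → x = y := by
          intro x _ y _ hxy
          have := mul_left_cancel hxy
          exact inv_injective this
        rw [show (∑ b ∈ B c, ‖f.coeff (c * b⁻¹)‖ ^ 2)
            = ∑ a ∈ (B c).image (fun b => c * b⁻¹), ‖f.coeff a‖ ^ 2 from (Finset.sum_image (f := fun a => ‖f.coeff a‖ ^ 2) hinj).symm]
        simp only [hΦ]
        apply Finset.sum_le_sum_of_subset_of_nonneg
        · intro a ha
          rw [Finset.mem_image] at ha
          obtain ⟨b, hb, rfl⟩ := ha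
          obtain ⟨hb1, _, hb3, _⟩ := hbfact c b hb
          exact Finset.mem_filter.2 ⟨hb3, hb1⟩
        · intro _ _ _; positivity
      have h5 : ∑ b ∈ B c, ‖g.coeff b‖ ^ 2 ≤ Ψ (γ₂ c) := by
        simp only [hΨ]
        apply Finset.sum_le_sum_of_subset_of_nonneg
        · intro b hb
          obtain ⟨_, hb2, _, hb4⟩ := hbfact c b hb
          exact Finset.mem_filter.2 ⟨hb4, hb2⟩
        · intro _ _ _; positivity
      calc ‖H k c‖ ^ 2 ≤ (∑ b ∈ B c, ‖f.coeff (c * b⁻¹)‖ ^ 2) * ∑ b ∈ B c, ‖g.coeff b‖ ^ 2 := h2.trans h3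
        _ ≤ Φ (γ₁ c) * Ψ (γ₂ c) :=
          mul_le_mul h4 h5 (Finset.sum_nonneg fun _ _ => sq_nonneg _) (hΦ0 _)
    -- reassembling: c is determined by (γ₁ c, γ₂ c)
    have hγmul : ∀ c : FreeGroup S, γ₁ c * γ₂ c = c := by
      intro c
      simp only [hγ₁, hγ₂]
      rw [FreeGroup.mul_mk, List.take_append_drop, FreeGroup.mk_toWord]
    have hsum : ∑ c ∈ T, ‖H k c‖ ^ 2 ≤
        (∑ x ∈ T.image γ₁, Φ x) * ∑ y ∈ T.image γ₂, Ψ y := by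
      have hpinj : ∀ x ∈ T, ∀ y ∈ T, (γ₁ x, γ₂ x) = (γ₁ y, γ₂ y) → x = y := by
        intro x _ y _ hxy
        have h1 : γ₁ x = γ₁ y := congrArg Prod.fst hxy
        have h2 : γ₂ x = γ₂ y := congrArg Prod.snd hxy
        rw [← hγmul x, ← hγmul y, h1, h2]
      calc ∑ c ∈ T, ‖H k c‖ ^ 2 ≤ ∑ c ∈ T, Φ (γ₁ c) * Ψ (γ₂ c) :=
            Finset.sum_le_sum fun c _ => hCS c
        _ = ∑ z ∈ T.image (fun c => (γ₁ c, γ₂ c)), Φ z.1 * Ψ z.2 :=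
            (Finset.sum_image (f := fun z => Φ z.1 * Ψ z.2) hpinj).symm
        _ ≤ ∑ z ∈ (T.image γ₁) ×ˢ (T.image γ₂), Φ z.1 * Ψ z.2 := by
            apply Finset.sum_le_sum_of_subset_of_nonneg
            · intro z hz
              rw [Finset.mem_image] at hz
              obtain ⟨c, hc, rfl⟩ := hz
              exact Finset.mem_product.2 ⟨Finset.mem_image_of_mem _ hc,
                Finset.mem_image_of_mem _ hc⟩
            · intro z _ _; exact mul_nonneg (hΦ0 _) (hΨ0 _)
        _ = (∑ x ∈ T.image γ₁, Φ x) * ∑ y ∈ T.image γ₂, Ψ y := by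
            rw [Finset.sum_product, Finset.sum_mul_sum]
    have hΦsum : ∀ X : Finset (FreeGroup S), ∑ x ∈ X, Φ x ≤ Nf := by
      intro X
      have heq : ∑ x ∈ X, Φ x = ∑ a ∈ f.coeff.support.filter (fun a => π₁ a ∈ X), ‖f.coeff a‖ ^ 2 := by
        rw [← Finset.sum_fiberwise_of_maps_to (g := π₁)
          (fun a ha => (Finset.mem_filter.1 ha).2) (fun a => ‖f.coeff a‖ ^ 2)]
        apply Finset.sum_congr rfl
        intro x hx
        simp only [hΦ]
        congr 1
        ext a
        simp only [Finset.mem_filter]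
        constructor
        · rintro ⟨ha, hax⟩; exact ⟨⟨ha, hax ▸ hx⟩, hax⟩
        · rintro ⟨⟨ha, _⟩, hax⟩; exact ⟨ha, hax⟩
      rw [heq, hNf]
      exact Finset.sum_le_sum_of_subset_of_nonneg (Finset.filter_subset _ _)
        fun _ _ _ => sq_nonneg _
    have hΨsum : ∀ Y : Finset (FreeGroup S), ∑ y ∈ Y, Ψ y ≤ Ng := by
      intro Y
      have heq : ∑ y ∈ Y, Ψ y = ∑ b ∈ g.coeff.support.filter (fun b => π₂ b ∈ Y), ‖g.coeff b‖ ^ 2 := by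
        rw [← Finset.sum_fiberwise_of_maps_to (g := π₂)
          (fun b hb => (Finset.mem_filter.1 hb).2) (fun b => ‖g.coeff b‖ ^ 2)]
        apply Finset.sum_congr rfl
        intro y hy
        simp only [hΨ]
        congr 1
        ext b
        simp only [Finset.mem_filter]
        constructor
        · rintro ⟨hb, hby⟩; exact ⟨⟨hb, hby ▸ hy⟩, hby⟩
        · rintro ⟨⟨hb, _⟩, hby⟩; exact ⟨hb, hby⟩
      rw [heq, hNg]
      exact Finset.sum_le_sum_of_subset_of_nonneg (Finset.filter_subset _ _)
        fun _ _ _ => sq_nonneg _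
    have hfinal : ∑ c ∈ T, ‖H k c‖ ^ 2 ≤ Nf * Ng :=
      hsum.trans (mul_le_mul (hΦsum _) (hΨsum _)
        (Finset.sum_nonneg fun _ _ => hΨ0 _) hNf0)
    calc Real.sqrt (∑ c ∈ T, ‖H k c‖ ^ 2) ≤ Real.sqrt (Nf * Ng) := Real.sqrt_le_sqrt hfinal
      _ = Real.sqrt Nf * Real.sqrt Ng := Real.sqrt_mul hNf0 _
      _ = l2norm f * l2norm g := rfl
  calc l2norm (f * g) ≤ ∑ k ∈ Finset.range (n + 1), Real.sqrt (∑ c ∈ T, ‖H k c‖ ^ 2) := hmink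
    _ ≤ ∑ _k ∈ Finset.range (n + 1), l2norm f * l2norm g := Finset.sum_le_sum hperk
    _ = (n + 1 : ℝ) * (l2norm f * l2norm g) := by
        rw [Finset.sum_const, Finset.card_range, nsmul_eq_mul]
        push_cast
        ring
    _ = (n + 1 : ℝ) * l2norm f * l2norm g := (mul_assoc _ _ _).symm
end

section
/- Let T be a tree with vertex set V and let Γ be a group acting freely on V by graph automorphisms of T. Fix a vertex v₀ ∈ V and define the length of c ∈ Γ as |c| = d(v₀, c·v₀). Fix n ∈ ℕ and suppose g : Γ → ℂ is finitely supported with support contained in {c ∈ Γ : |c| = n}. Then for every finitely supported f : Γ → ℂ one has ‖f*g‖₂ ≤ (n+1)·‖f‖₂·‖g‖₂. -/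
open SimpleGraph

namespace HaagerupTree

variable {V : Type*} {T : SimpleGraph V}

lemma path_length_eq_dist (hT : T.IsTree) {u v : V} (P : T.Walk u v) (hP : P.IsPath) :
    P.length = T.dist u v := by
  obtain ⟨P', hP', hlen⟩ := hT.isConnected.exists_path_of_dist u v
  have h : (⟨P, hP⟩ : T.Path u v) = ⟨P', hP'⟩ := hT.IsAcyclic.path_unique _ _
  have h' : P = P' := congrArg Subtype.val h
  rw [h']; exact hlen

/-- the canonical path between two vertices of a tree -/
noncomputable def gpath (hT : T.IsTree) (u v : V) : T.Walk u v :=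
  (hT.existsUnique_path u v).exists.choose

lemma gpath_isPath (hT : T.IsTree) (u v : V) : (gpath hT u v).IsPath :=
  (hT.existsUnique_path u v).exists.choose_spec

lemma gpath_length (hT : T.IsTree) (u v : V) : (gpath hT u v).length = T.dist u v :=
  path_length_eq_dist hT _ (gpath_isPath hT u v)

lemma eq_gpath (hT : T.IsTree) {u v : V} {P : T.Walk u v} (hP : P.IsPath) :
    P = gpath hT u v := by
  have h : (⟨P, hP⟩ : T.Path u v) = ⟨gpath hT u v, gpath_isPath hT u v⟩ :=
    hT.IsAcyclic.path_unique _ _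
  exact congrArg Subtype.val h

lemma getVert_one_takeUntil [DecidableEq V] {u v w : V} (p : T.Walk u v) (h : w ∈ p.support) (hw : w ≠ u) :
    (p.takeUntil w h).getVert 1 = p.getVert 1 := by
  have hs := p.take_spec h
  have hl : (p.takeUntil w h).length ≠ 0 := by
    intro h0
    exact hw (Walk.eq_of_length_eq_zero h0).symm
  conv_rhs => rw [← hs]
  rw [Walk.getVert_append]
  by_cases h1 : 1 < (p.takeUntil w h).length
  · simp [h1]
  · have h2 : (p.takeUntil w h).length = 1 := by omega
    rw [if_neg (by omega)]
    rw [h2]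
    rw [Walk.getVert_zero]
    conv_lhs => rw [← h2]
    rw [Walk.getVert_length]

/-- two paths out of the same vertex with different first steps only share that vertex -/
lemma support_inter [DecidableEq V] (hT : T.IsTree) {A B C : V} {P1 : T.Walk A B} {P2 : T.Walk A C}
    (h1 : P1.IsPath) (h2 : P2.IsPath) (hne : P1.getVert 1 ≠ P2.getVert 1)
    {z : V} (hz1 : z ∈ P1.support) (hz2 : z ∈ P2.support) : z = A := by
  by_contra hzA
  have t1 := h1.takeUntil hz1
  have t2 := h2.takeUntil hz2
  have e : P1.takeUntil z hz1 = P2.takeUntil z hz2 := by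
    have h : (⟨_, t1⟩ : T.Path A z) = ⟨_, t2⟩ := hT.IsAcyclic.path_unique _ _
    exact congrArg Subtype.val h
  have e1 := getVert_one_takeUntil P1 hz1 hzA
  have e2 := getVert_one_takeUntil P2 hz2 hzA
  rw [e] at e1
  exact hne (e1.symm.trans e2)

lemma nocancel [DecidableEq V] (hT : T.IsTree) {A B C : V} {P1 : T.Walk A B} {P2 : T.Walk A C}
    (h1 : P1.IsPath) (h2 : P2.IsPath) (hne : P1.getVert 1 ≠ P2.getVert 1) :
    (P1.reverse.append P2).IsPath := by
  rw [Walk.isPath_def, Walk.support_append]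
  apply List.Nodup.append
  · exact h1.reverse.support_nodup
  · exact h2.support_nodup.tail
  · intro z hz1 hz2
    rw [Walk.support_reverse, List.mem_reverse] at hz1
    have hz2' : z ∈ P2.support := List.mem_of_mem_tail hz2
    have : z = A := support_inter hT h1 h2 hne hz1 hz2'
    subst this
    have : P2.support = z :: P2.support.tail := P2.support_eq_cons
    have hnd := h2.support_nodup
    rw [this] at hnd
    exact (List.nodup_cons.mp hnd).1 hz2

/-- The key combinatorial lemma about trees: two paths `R : A → O` and `S : A → C`
agree up to some index `p` (the distance to the median of `O`, `A`, `C`), and past the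
median the reversed `R` continues to a geodesic from `O` to `C`. -/
lemma treekey [DecidableEq V] (hT : T.IsTree) {A O : V} (R : T.Walk A O) (hR : R.IsPath) :
    ∀ {C : V} (S : T.Walk A C), S.IsPath →
    ∃ p, p ≤ R.length ∧ p ≤ S.length ∧ R.length + S.length = T.dist O C + 2*p ∧
      R.getVert p = S.getVert p ∧
      ∃ Q : T.Walk O C, Q.IsPath ∧ Q.getVert (R.length - p) = R.getVert p := by
  induction R with
  | nil =>
    intro C S hS
    refine ⟨0, by simp, by simp, ?_, by simp, S, hS, by simp⟩
    have := path_length_eq_dist hT S hS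
    simp only [Walk.length_nil]
    omega
  | @cons A x O hadj R' ih =>
    intro C S hS
    cases S with
    | nil =>
      refine ⟨0, by simp, by simp, ?_, by simp, (Walk.cons hadj R').reverse, hR.reverse, ?_⟩
      · have := path_length_eq_dist hT (Walk.cons hadj R').reverse hR.reverse
        rw [Walk.length_reverse] at this
        simp only [Walk.length_nil]
        omega
      · rw [Walk.getVert_reverse]
        simp
    | @cons _ y _ hadj' S' =>
      by_cases hxy : x = y
      · subst hxy
        obtain ⟨p, hp1, hp2, hp3, hp4, Q, hQ, hQv⟩ := ih hR.of_cons S' hS.of_cons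
        refine ⟨p + 1, by rw [Walk.length_cons]; omega, by rw [Walk.length_cons]; omega, ?_, ?_, Q, hQ, ?_⟩
        · simp only [Walk.length_cons]; omega
        · rw [Walk.getVert_cons_succ, Walk.getVert_cons_succ]; exact hp4
        · simp only [Walk.length_cons]
          rw [Nat.succ_sub_succ]
          rw [Walk.getVert_cons_succ]
          exact hQv
      · have hne : (Walk.cons hadj R').getVert 1 ≠ (Walk.cons hadj' S').getVert 1 := by
          rw [Walk.getVert_cons_succ, Walk.getVert_cons_succ,
            Walk.getVert_zero, Walk.getVert_zero]
          exact hxy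
        have hW : ((Walk.cons hadj R').reverse.append (Walk.cons hadj' S')).IsPath :=
          nocancel hT hR hS hne
        refine ⟨0, by simp, by simp, ?_, by simp, _, hW, ?_⟩
        · have := path_length_eq_dist hT _ hW
          rw [Walk.length_append, Walk.length_reverse] at this
          omega
        · rw [Walk.getVert_append]
          rw [if_neg (by rw [Walk.length_reverse]; omega)]
          simp [Walk.length_reverse]


section Group
variable {Γ : Type*} [Group Γ] [MulAction Γ V]

/-- action by a group element as a graph homomorphism -/
def mulHom (haut : ∀ (c : Γ) (u v : V), T.Adj u v ↔ T.Adj (c • u) (c • v)) (c : Γ) :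
    T →g T :=
  ⟨fun v => c • v, fun {a b} h => (haut c a b).mp h⟩

lemma mulHom_apply (haut : ∀ (c : Γ) (u v : V), T.Adj u v ↔ T.Adj (c • u) (c • v)) (c : Γ)
    (v : V) : mulHom haut c v = c • v := rfl

lemma dist_smul (hT : T.IsTree)
    (haut : ∀ (c : Γ) (u v : V), T.Adj u v ↔ T.Adj (c • u) (c • v))
    (c : Γ) (u v : V) : T.dist (c • u) (c • v) = T.dist u v := by
  have key : ∀ (d : Γ) (x y : V), T.dist (d • x) (d • y) ≤ T.dist x y := by
    intro d x y
    obtain ⟨P, hP, hl⟩ := hT.isConnected.exists_path_of_dist x y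
    have h2 := SimpleGraph.dist_le (P.map (mulHom haut d))
    rwa [Walk.length_map, hl] at h2
  refine le_antisymm (key c u v) ?_
  have := key c⁻¹ (c • u) (c • v)
  rwa [inv_smul_smul, inv_smul_smul] at this

lemma getVert_map {V' : Type*} {T' : SimpleGraph V'} (φ : T →g T') {u v : V}
    (p : T.Walk u v) (i : ℕ) : (p.map φ).getVert i = φ (p.getVert i) := by
  induction p generalizing i with
  | nil => simp [Walk.getVert]
  | cons h q ih =>
    cases i with
    | zero => simp
    | succ j => rw [Walk.map_cons, Walk.getVert_cons_succ, Walk.getVert_cons_succ]; exact ih j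

lemma smul_injective (c : Γ) : Function.Injective (fun x : V => c • x) :=
  fun x y h => by simpa using congrArg (fun z => c⁻¹ • z) h



lemma key (hT : T.IsTree)
    (haut : ∀ (c : Γ) (u v : V), T.Adj u v ↔ T.Adj (c • u) (c • v))
    (v₀ : V) (a b : Γ) :
    ∃ p, p ≤ T.dist v₀ (a • v₀) ∧ p ≤ T.dist v₀ (b • v₀) ∧
      T.dist v₀ (a • v₀) + T.dist v₀ (b • v₀) = T.dist v₀ ((a * b) • v₀) + 2 * p ∧
      a • ((gpath hT v₀ (b • v₀)).getVert p)
        = (gpath hT v₀ (a • v₀)).getVert (T.dist v₀ (a • v₀) - p) ∧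
      a • ((gpath hT v₀ (b • v₀)).getVert p)
        = (gpath hT v₀ ((a * b) • v₀)).getVert (T.dist v₀ (a • v₀) - p) := by
  classical
  set Pa := gpath hT v₀ (a • v₀) with hPa
  set Pb := gpath hT v₀ (b • v₀) with hPb
  have hab : a • (b • v₀) = (a * b) • v₀ := (mul_smul a b v₀).symm
  let S : T.Walk (a • v₀) ((a * b) • v₀) := (Pb.map (mulHom haut a)).copy (mulHom_apply haut a v₀) ((mulHom_apply haut a (b • v₀)).trans hab)
  have hSpath : S.IsPath := by
    rw [Walk.isPath_copy]
    exact Walk.map_isPath_of_injective (smul_injective a) (gpath_isPath hT v₀ (b • v₀))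
  have hRpath : Pa.reverse.IsPath := (gpath_isPath hT v₀ (a • v₀)).reverse
  obtain ⟨p, hp1, hp2, hp3, hp4, Q, hQ, hQv⟩ := treekey hT Pa.reverse hRpath S hSpath
  have hRlen : Pa.reverse.length = T.dist v₀ (a • v₀) := by
    rw [Walk.length_reverse, hPa, gpath_length]
  have hSlen : S.length = T.dist v₀ (b • v₀) := by
    simp only [S, Walk.length_copy, Walk.length_map, hPb, gpath_length]
  have hSv : S.getVert p = a • (Pb.getVert p) := by
    simp only [S, Walk.getVert_copy]
    rw [getVert_map]
    rfl
  have hRv : Pa.reverse.getVert p = Pa.getVert (T.dist v₀ (a • v₀) - p) := by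
    rw [Walk.getVert_reverse, hPa, gpath_length]
  have hQeq : Q = gpath hT v₀ ((a * b) • v₀) := eq_gpath hT hQ
  refine ⟨p, ?_, ?_, ?_, ?_, ?_⟩
  · rw [← hRlen]; exact hp1
  · rw [← hSlen]; exact hp2
  · rw [← hRlen, ← hSlen]; exact hp3
  · rw [← hSv, ← hp4, hRv]
  · rw [← hSv, ← hp4, ← hQeq, ← hQv, hRlen]

lemma unique_c (hT : T.IsTree)
    (haut : ∀ (c : Γ) (u v : V), T.Adj u v ↔ T.Adj (c • u) (c • v))
    (hfree : ∀ (c : Γ) (x : V), c • x = x → c = 1)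
    (v₀ : V) (n p : ℕ) {a b₁ b₂ a₁ a₂ b' : Γ}
    (hb₁ : T.dist v₀ (b₁ • v₀) = n) (hb₂ : T.dist v₀ (b₂ • v₀) = n)
    (hb' : T.dist v₀ (b' • v₀) = n)
    (h₁ : a₁ * b' = a * b₁) (h₂ : a₂ * b' = a * b₂)
    (e1 : T.dist v₀ (a • v₀) + n = T.dist v₀ ((a * b₁) • v₀) + 2 * p)
    (e1' : T.dist v₀ (a₁ • v₀) + n = T.dist v₀ ((a * b₁) • v₀) + 2 * p)
    (e2 : T.dist v₀ (a • v₀) + n = T.dist v₀ ((a * b₂) • v₀) + 2 * p)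
    (e2' : T.dist v₀ (a₂ • v₀) + n = T.dist v₀ ((a * b₂) • v₀) + 2 * p) :
    a * b₁ = a * b₂ := by
  classical
  set k := T.dist v₀ (a • v₀) with hk
  -- step 1 : medians of the two factorizations of c₁ agree
  have med : ∀ (x y : Γ), T.dist v₀ (y • v₀) = n →
      T.dist v₀ (x • v₀) + n = T.dist v₀ ((x * y) • v₀) + 2 * p →
      x • ((gpath hT v₀ (y • v₀)).getVert p)
        = (gpath hT v₀ (x • v₀)).getVert (T.dist v₀ (x • v₀) - p) ∧
      x • ((gpath hT v₀ (y • v₀)).getVert p)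
        = (gpath hT v₀ ((x * y) • v₀)).getVert (T.dist v₀ (x • v₀) - p) := by
    intro x y hy hxy
    obtain ⟨q, hq1, hq2, hq3, hq4, hq5⟩ := key hT haut v₀ x y
    have hqp : q = p := by rw [hy] at hq3; omega
    subst hqp
    exact ⟨hq4, hq5⟩
  have ha₁ : T.dist v₀ (a₁ • v₀) = k := by omega
  have ha₂ : T.dist v₀ (a₂ • v₀) = k := by omega
  obtain ⟨m1a, m1b⟩ := med a b₁ hb₁ e1
  obtain ⟨m1a', m1b'⟩ := med a₁ b' hb' (by rw [h₁, ha₁]; exact e1)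
  obtain ⟨m2a, m2b⟩ := med a b₂ hb₂ e2
  obtain ⟨m2a', m2b'⟩ := med a₂ b' hb' (by rw [h₂, ha₂]; exact e2)
  -- the common median of O, A, C₁ expressed from the geodesic to c₁ :
  rw [h₁] at m1b'
  rw [h₂] at m2b'
  rw [ha₁] at m1b'
  rw [ha₂] at m2b'
  -- m1b : a • ū(b₁) = Q_{c₁}.getVert (k-p) ; m1b' : a₁ • ū(b') = Q_{c₁}.getVert (k-p)
  have key1 : a₁ • ((gpath hT v₀ (b' • v₀)).getVert p)
      = (gpath hT v₀ (a • v₀)).getVert (k - p) := by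
    rw [m1b', ← m1b, m1a]
  have key2 : a₂ • ((gpath hT v₀ (b' • v₀)).getVert p)
      = (gpath hT v₀ (a • v₀)).getVert (k - p) := by
    rw [m2b', ← m2b, m2a]
  have : a₁ = a₂ := by
    have h := key1.trans key2.symm
    have h' : (a₂⁻¹ * a₁) • ((gpath hT v₀ (b' • v₀)).getVert p)
        = (gpath hT v₀ (b' • v₀)).getVert p := by
      rw [mul_smul, h, inv_smul_smul]
    have := hfree _ _ h'
    rwa [inv_mul_eq_one, eq_comm] at this
  rw [← h₁, ← h₂, this]

end Group
end HaagerupTree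

open HaagerupTree in
/-- Haagerup's inequality for a group acting freely on the vertices of a tree:
with length `|c| = d(v₀, c • v₀)`, if `g` is supported on elements of length `n`,
then `‖f * g‖₂ ≤ (n+1) ‖f‖₂ ‖g‖₂`. -/
theorem haagerup_inequality_tree {V : Type*} (T : SimpleGraph V) (hT : T.IsTree)
    {Γ : Type*} [Group Γ] [MulAction Γ V]
    (haut : ∀ (c : Γ) (u v : V), T.Adj u v ↔ T.Adj (c • u) (c • v))
    (hfree : ∀ (c : Γ) (x : V), c • x = x → c = 1)
    (v₀ : V) (n : ℕ)
    (g : MonoidAlgebra ℂ Γ)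
    (hg : ∀ c ∈ g.coeff.support, T.dist v₀ (c • v₀) = n)
    (f : MonoidAlgebra ℂ Γ) :
    l2norm (f * g) ≤ (n + 1 : ℝ) * l2norm f * l2norm g := by
  classical
  set F := f.coeff.support with hF
  set G := g.coeff.support with hG
  set S := (f * g).coeff.support with hS
  set A := ∑ a ∈ F, ‖f.coeff a‖ ^ 2 with hA
  set B := ∑ b ∈ G, ‖g.coeff b‖ ^ 2 with hB
  have hA0 : 0 ≤ A := Finset.sum_nonneg fun _ _ => sq_nonneg _
  have hB0 : 0 ≤ B := Finset.sum_nonneg fun _ _ => sq_nonneg _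
  -- the pieces of the convolution, according to the amount of cancellation
  set Φ : ℕ → Γ → ℂ := fun p c => ∑ q ∈ F ×ˢ G,
    if q.1 * q.2 = c ∧ T.dist v₀ (q.1 • v₀) + n
        = T.dist v₀ ((q.1 * q.2) • v₀) + 2 * p then f.coeff q.1 * g.coeff q.2 else 0 with hΦ
  -- decomposition of the convolution
  have FA : ∀ c, (f * g).coeff c = ∑ p ∈ Finset.range (n + 1), Φ p c := by
    intro c
    rw [MonoidAlgebra.coeff_mul, Finsupp.sum]
    simp only [Finsupp.sum]
    rw [← Finset.sum_product']
    rw [hΦ]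
    rw [Finset.sum_comm]
    apply Finset.sum_congr rfl
    intro q hq
    have hq2 : q.2 ∈ G := (Finset.mem_product.mp hq).2
    have hq2n : T.dist v₀ (q.2 • v₀) = n := hg q.2 hq2
    obtain ⟨p₀, hp₀a, hp₀b, hp₀eq, -, -⟩ := key hT haut v₀ q.1 q.2
    have hp₀n : p₀ ≤ n := hq2n ▸ hp₀b
    have hiff : ∀ p : ℕ, (T.dist v₀ (q.1 • v₀) + n
        = T.dist v₀ ((q.1 * q.2) • v₀) + 2 * p) ↔ p = p₀ := by
      intro p; constructor <;> intro h <;> omega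
    by_cases hc : q.1 * q.2 = c
    · subst hc
      have hiff' : ∀ p : ℕ, (q.1 * q.2 = q.1 * q.2 ∧ T.dist v₀ (q.1 • v₀) + n
          = T.dist v₀ ((q.1 * q.2) • v₀) + 2 * p) ↔ p = p₀ := by
        intro p
        rw [← hiff p]
        simp
      rw [if_pos rfl]
      rw [Finset.sum_congr rfl (fun p _ => if_congr (hiff' p) rfl rfl)]
      rw [Finset.sum_ite_eq' (Finset.range (n + 1)) p₀ (fun _ => f.coeff q.1 * g.coeff q.2)]
      rw [if_pos (Finset.mem_range.mpr (by omega))]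
    · rw [if_neg hc]
      exact (Finset.sum_eq_zero fun p _ => if_neg (fun hcon => hc hcon.1)).symm
  -- the square norms of each piece
  have Bp : ∀ p : ℕ, (∑ c ∈ S, ‖Φ p c‖ ^ 2) ≤ A * B := by
    intro p
    set Tc : Γ → Finset (Γ × Γ) := fun c => (F ×ˢ G).filter
      (fun q => q.1 * q.2 = c ∧ T.dist v₀ (q.1 • v₀) + n
        = T.dist v₀ ((q.1 * q.2) • v₀) + 2 * p) with hTc
    have hΦc : ∀ c, Φ p c = ∑ q ∈ Tc c, f.coeff q.1 * g.coeff q.2 := by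
      intro c; rw [hΦ, hTc, Finset.sum_filter]
    set t : Γ × Γ → ℝ := fun r => ‖f.coeff r.1‖ ^ 2 * ‖g.coeff r.2‖ ^ 2 with ht
    have ht0 : ∀ r, 0 ≤ t r := fun r => mul_nonneg (sq_nonneg _) (sq_nonneg _)
    set φ : (Γ × Γ) × (Γ × Γ) → Γ × Γ := fun z => (z.1.1, z.2.2) with hφ
    set U : Γ → Finset (Γ × Γ) := fun c => (Tc c ×ˢ Tc c).image φ with hU
    -- pointwise bound by the symmetrized square
    have step1 : ∀ c, ‖Φ p c‖ ^ 2 ≤ ∑ r ∈ U c, t r := by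
      intro c
      have l1 : ‖Φ p c‖ ≤ ∑ q ∈ Tc c, ‖f.coeff q.1‖ * ‖g.coeff q.2‖ := by
        rw [hΦc]
        refine (norm_sum_le _ _).trans ?_
        apply Finset.sum_le_sum
        intro q _
        rw [norm_mul]
      have l2 : ‖Φ p c‖ ^ 2 ≤ (∑ q ∈ Tc c, ‖f.coeff q.1‖ * ‖g.coeff q.2‖) ^ 2 := by
        apply pow_le_pow_left₀ (norm_nonneg _) l1
      refine l2.trans ?_
      rw [sq, Finset.sum_mul_sum]
      have l3 : ∀ q ∈ Tc c, ∀ q' ∈ Tc c,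
          (‖f.coeff q.1‖ * ‖g.coeff q.2‖) * (‖f.coeff q'.1‖ * ‖g.coeff q'.2‖)
          ≤ ((‖f.coeff q.1‖ * ‖g.coeff q'.2‖) ^ 2 + (‖f.coeff q'.1‖ * ‖g.coeff q.2‖) ^ 2) / 2 := by
        intro q _ q' _
        nlinarith [sq_nonneg (‖f.coeff q.1‖ * ‖g.coeff q'.2‖ - ‖f.coeff q'.1‖ * ‖g.coeff q.2‖),
          norm_nonneg (f.coeff q.1), norm_nonneg (g.coeff q.2), norm_nonneg (f.coeff q'.1), norm_nonneg (g.coeff q'.2)]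
      have l4 : ∑ q ∈ Tc c, ∑ q' ∈ Tc c, (‖f.coeff q.1‖ * ‖g.coeff q.2‖) * (‖f.coeff q'.1‖ * ‖g.coeff q'.2‖)
          ≤ ∑ q ∈ Tc c, ∑ q' ∈ Tc c,
            ((‖f.coeff q.1‖ * ‖g.coeff q'.2‖) ^ 2 + (‖f.coeff q'.1‖ * ‖g.coeff q.2‖) ^ 2) / 2 := by
        apply Finset.sum_le_sum
        intro q hq
        apply Finset.sum_le_sum
        intro q' hq'
        exact l3 q hq q' hq'
      refine l4.trans ?_
      have l5 : ∑ q ∈ Tc c, ∑ q' ∈ Tc c,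
            ((‖f.coeff q.1‖ * ‖g.coeff q'.2‖) ^ 2 + (‖f.coeff q'.1‖ * ‖g.coeff q.2‖) ^ 2) / 2
          = ∑ q ∈ Tc c, ∑ q' ∈ Tc c, (‖f.coeff q.1‖ * ‖g.coeff q'.2‖) ^ 2 := by
        have comm : ∑ q ∈ Tc c, ∑ q' ∈ Tc c, (‖f.coeff q'.1‖ * ‖g.coeff q.2‖) ^ 2
            = ∑ q ∈ Tc c, ∑ q' ∈ Tc c, (‖f.coeff q.1‖ * ‖g.coeff q'.2‖) ^ 2 := Finset.sum_comm
        have expand : ∑ q ∈ Tc c, ∑ q' ∈ Tc c,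
              ((‖f.coeff q.1‖ * ‖g.coeff q'.2‖) ^ 2 + (‖f.coeff q'.1‖ * ‖g.coeff q.2‖) ^ 2)
            = 2 * ∑ q ∈ Tc c, ∑ q' ∈ Tc c, (‖f.coeff q.1‖ * ‖g.coeff q'.2‖) ^ 2 := by
          simp only [Finset.sum_add_distrib]
          rw [comm]; ring
        simp only [← Finset.sum_div]
        rw [expand]; ring
      rw [l5]
      -- reindex by the image
      have hinj : ∀ z ∈ Tc c ×ˢ Tc c, ∀ z' ∈ Tc c ×ˢ Tc c, φ z = φ z' → z = z' := by
        intro z hz z' hz' he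
        have hz1 := (Finset.mem_product.mp hz).1
        have hz2 := (Finset.mem_product.mp hz).2
        have hz1' := (Finset.mem_product.mp hz').1
        have hz2' := (Finset.mem_product.mp hz').2
        rw [hTc, Finset.mem_filter] at hz1 hz2 hz1' hz2'
        simp only [hφ, Prod.mk.injEq] at he
        obtain ⟨e11, e22⟩ := he
        have e12 : z.1.2 = z'.1.2 := by
          have h1 := hz1.2.1
          have h2 := hz1'.2.1
          rw [← e11] at h2
          exact mul_left_cancel (h1.trans h2.symm)
        have e21 : z.2.1 = z'.2.1 := by
          have h1 := hz2.2.1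
          have h2 := hz2'.2.1
          rw [← e22] at h2
          exact mul_right_cancel (h1.trans h2.symm)
        exact Prod.ext (Prod.ext e11 e12) (Prod.ext e21 e22)
      have l6 : ∑ q ∈ Tc c, ∑ q' ∈ Tc c, (‖f.coeff q.1‖ * ‖g.coeff q'.2‖) ^ 2 = ∑ r ∈ U c, t r := by
        rw [← Finset.sum_product']
        rw [hU, Finset.sum_image hinj]
        apply Finset.sum_congr rfl
        intro z _
        rw [ht, hφ, mul_pow]
      rw [← l6]
    -- the images are pairwise disjoint thanks to the geometric rigidity
    have hdisj : (↑S : Set Γ).PairwiseDisjoint U := by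
      intro c hc c' hc' hne
      simp only [Function.onFun]
      rw [Finset.disjoint_left]
      intro r hr hr'
      exfalso
      rw [hU, Finset.mem_image] at hr hr'
      obtain ⟨z, hz, hze⟩ := hr
      obtain ⟨z', hz', hze'⟩ := hr'
      have hz1 := (Finset.mem_product.mp hz).1
      have hz2 := (Finset.mem_product.mp hz).2
      have hz1' := (Finset.mem_product.mp hz').1
      have hz2' := (Finset.mem_product.mp hz').2
      rw [hTc, Finset.mem_filter] at hz1 hz2 hz1' hz2'
      -- z = ((a,b₁),(a₁,b'))  with a*b₁ = c, a₁*b' = c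
      -- z' = ((a,b₂),(a₂,b')) with a*b₂ = c', a₂*b' = c'
      rw [← hze'] at hze
      simp only [hφ, Prod.mk.injEq] at hze
      have ha : z.1.1 = z'.1.1 := hze.1
      have hb' : z.2.2 = z'.2.2 := hze.2
      set a := z.1.1
      set b₁ := z.1.2
      set a₁ := z.2.1
      set b'v := z.2.2
      set b₂ := z'.1.2
      set a₂ := z'.2.1
      have hmemb₁ : b₁ ∈ G := (Finset.mem_product.mp hz1.1).2
      have hmemb₂ : b₂ ∈ G := (Finset.mem_product.mp hz1'.1).2
      have hmemb' : b'v ∈ G := (Finset.mem_product.mp hz2.1).2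
      have hc1 : a * b₁ = c := hz1.2.1
      have hc1' : a₁ * b'v = c := hz2.2.1
      have hc2 : z'.1.1 * b₂ = c' := hz1'.2.1
      have hc2' : a₂ * z'.2.2 = c' := hz2'.2.1
      rw [← ha] at hc2
      rw [← hb'] at hc2'
      have e1 := hz1.2.2
      have e1' := hz2.2.2
      have e2 := hz1'.2.2
      have e2' := hz2'.2.2
      rw [← ha] at e2
      rw [← hb'] at e2'
      have : a * b₁ = a * b₂ := by
        refine unique_c hT haut hfree v₀ n p (a₁ := a₁) (a₂ := a₂) (hg _ hmemb₁) (hg _ hmemb₂) (hg _ hmemb')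
          ?_ ?_ ?_ ?_ ?_ ?_
        · rw [hc1', hc1]
        · rw [hc2', hc2]
        · exact e1
        · rw [hc1', ← hc1] at e1'; exact e1'
        · exact e2
        · rw [hc2', ← hc2] at e2'; exact e2'
      exact hne (by rw [← hc1, ← hc2, this])
    -- sum over c, using disjointness
    calc ∑ c ∈ S, ‖Φ p c‖ ^ 2 ≤ ∑ c ∈ S, ∑ r ∈ U c, t r :=
          Finset.sum_le_sum fun c _ => step1 c
      _ = ∑ r ∈ S.biUnion U, t r := (Finset.sum_biUnion hdisj).symm
      _ ≤ ∑ r ∈ F ×ˢ G, t r := by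
          apply Finset.sum_le_sum_of_subset_of_nonneg
          · intro r hr
            rw [Finset.mem_biUnion] at hr
            obtain ⟨c, -, hr⟩ := hr
            rw [hU, Finset.mem_image] at hr
            obtain ⟨z, hz, hze⟩ := hr
            have hz1 := (Finset.mem_product.mp hz).1
            have hz2 := (Finset.mem_product.mp hz).2
            rw [hTc, Finset.mem_filter] at hz1 hz2
            have h1 : z.1.1 ∈ F := (Finset.mem_product.mp hz1.1).1
            have h2 : z.2.2 ∈ G := (Finset.mem_product.mp hz2.1).2
            rw [← hze]
            exact Finset.mem_product.mpr ⟨h1, h2⟩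
          · intro r _ _
            exact ht0 r
      _ = A * B := by
          rw [hA, hB, Finset.sum_mul_sum]
          rw [← Finset.sum_product']
    -- the ℓ² triangle inequality in euclidean space
  set vv : ℕ → EuclideanSpace ℂ {x // x ∈ S} := fun p => WithLp.toLp 2 (fun c => Φ p ↑c) with hvv
  have hveq : ∀ p, ‖vv p‖ = Real.sqrt (∑ c ∈ S, ‖Φ p c‖ ^ 2) := by
    intro p
    rw [EuclideanSpace.norm_eq]
    rw [← Finset.sum_coe_sort S (fun c => ‖Φ p c‖ ^ 2)]
  have hmain : l2norm (f * g) = ‖∑ p ∈ Finset.range (n + 1), vv p‖ := by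
    rw [EuclideanSpace.norm_eq]
    show Real.sqrt (∑ c ∈ S, ‖(f * g).coeff c‖ ^ 2) = _
    rw [← Finset.sum_coe_sort S (fun c => ‖(f * g).coeff c‖ ^ 2)]
    congr 1
    apply Finset.sum_congr rfl
    intro i _
    congr 1
    rw [FA i]
    show ‖∑ p ∈ Finset.range (n + 1), Φ p ↑i‖ = _
    congr 1
    rw [WithLp.ofLp_sum, Finset.sum_apply]
  rw [hmain]
  calc ‖∑ p ∈ Finset.range (n + 1), vv p‖ ≤ ∑ p ∈ Finset.range (n + 1), ‖vv p‖ :=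
        norm_sum_le _ _
    _ ≤ ∑ p ∈ Finset.range (n + 1), Real.sqrt (A * B) := by
        apply Finset.sum_le_sum
        intro p _
        rw [hveq p]
        exact Real.sqrt_le_sqrt (Bp p)
    _ = (n + 1 : ℝ) * Real.sqrt (A * B) := by
        rw [Finset.sum_const, Finset.card_range, nsmul_eq_mul]
        push_cast
        ring
    _ = (n + 1 : ℝ) * l2norm f * l2norm g := by
        rw [Real.sqrt_mul hA0]
        show _ = (n + 1 : ℝ) * Real.sqrt A * Real.sqrt B
        ring
end

section
/- Let T₁ and T₂ be trees with vertex sets V₁ and V₂, and let Γ be an Ã₁×Ã₁ group, i.e. a group of shape-preserving bijections of V₁×V₂ acting simply transitively on V₁×V₂. Fix a vertex v₀ ∈ V₁×V₂ and define sh(c) = sh(v₀, c·v₀) for c ∈ Γ. Fix (m,n) ∈ ℕ×ℕ and suppose g : Γ → ℂ is finitely supported with support contained in {c ∈ Γ : sh(c) = (m,n)}. Then for every finitely supported f : Γ → ℂ one has ‖f*g‖₂ ≤ (m+1)(n+1)·‖f‖₂·‖g‖₂. -/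
/-- The shape of an ordered pair of vertices in a product of two trees. -/
noncomputable def shape {V₁ V₂ : Type*} (T₁ : SimpleGraph V₁) (T₂ : SimpleGraph V₂)
    (u v : V₁ × V₂) : ℕ × ℕ :=
  (T₁.dist u.1 v.1, T₂.dist u.2 v.2)

open SimpleGraph Finset

section Tree
variable {V : Type*} {T : SimpleGraph V}

lemma tree_path_length (hT : T.IsTree) {x y : V} (p : T.Walk x y) (hp : p.IsPath) :
    p.length = T.dist x y := by
  obtain ⟨q, hq, hlen⟩ := hT.isConnected.exists_path_of_dist x y
  rw [(hT.existsUnique_path x y).unique hp hq, hlen]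

lemma tree_between_unique (hT : T.IsTree) {x y p q : V}
    (hp : T.dist x p + T.dist p y = T.dist x y)
    (hq : T.dist x q + T.dist q y = T.dist x y)
    (hd : T.dist x p = T.dist x q) : p = q := by
  obtain ⟨P₁, hP₁⟩ := (hT.isConnected x p).exists_walk_length_eq_dist
  obtain ⟨P₂, hP₂⟩ := (hT.isConnected p y).exists_walk_length_eq_dist
  obtain ⟨Q₁, hQ₁⟩ := (hT.isConnected x q).exists_walk_length_eq_dist
  obtain ⟨Q₂, hQ₂⟩ := (hT.isConnected q y).exists_walk_length_eq_dist
  have hPlen : (P₁.append P₂).length = T.dist x y := by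
    rw [Walk.length_append, hP₁, hP₂, hp]
  have hQlen : (Q₁.append Q₂).length = T.dist x y := by
    rw [Walk.length_append, hQ₁, hQ₂, hq]
  have hPpath := (P₁.append P₂).isPath_of_length_eq_dist hPlen
  have hQpath := (Q₁.append Q₂).isPath_of_length_eq_dist hQlen
  have hPQ : P₁.append P₂ = Q₁.append Q₂ := (hT.existsUnique_path x y).unique hPpath hQpath
  have h1 : (P₁.append P₂).getVert (T.dist x p) = p := by
    rw [Walk.getVert_append, hP₁]
    simp
  have h2 : (Q₁.append Q₂).getVert (T.dist x q) = q := by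
    rw [Walk.getVert_append, hQ₁]
    simp
  rw [← h1, ← h2, ← hd, hPQ]

private lemma isPath_append_aux {x y z : V} {p : T.Walk x y} {q : T.Walk y z}
    (hp : p.IsPath) (hq : q.IsPath)
    (h : ∀ v ∈ p.support, v ∈ q.support → v = y) : (p.append q).IsPath := by
  rw [Walk.isPath_def, Walk.support_append, List.nodup_append]
  refine ⟨hp.support_nodup, ?_, ?_⟩
  · have := hq.support_nodup
    rw [q.support_eq_cons] at this
    exact this.of_cons
  · intro v hv w hv' hvw
    subst hvw
    have hvq : v ∈ q.support := by
      rw [q.support_eq_cons]; exact List.mem_cons_of_mem _ hv'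
    have hvy : v = y := h v hv hvq
    have := hq.support_nodup
    rw [q.support_eq_cons, List.nodup_cons] at this
    exact this.1 (hvy ▸ hv')

lemma tree_median (hT : T.IsTree) (x y z : V) :
    ∃ p : V, T.dist x p + T.dist p y = T.dist x y ∧
      T.dist x p + T.dist p z = T.dist x z ∧
      T.dist y p + T.dist p z = T.dist y z := by
  classical
  obtain ⟨P, hPpath, hPlen⟩ := hT.isConnected.exists_path_of_dist x y
  -- choose p on P minimizing distance to z
  obtain ⟨p, hpmem', hpmin'⟩ := Finset.exists_min_image P.support.toFinset
    (fun v => T.dist v z) ⟨x, by simp⟩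
  have hpmem : p ∈ P.support := by simpa using hpmem'
  have hpmin : ∀ v ∈ P.support, T.dist p z ≤ T.dist v z := by
    intro v hv; exact hpmin' v (by simpa using hv)
  set Pre := P.takeUntil p hpmem with hPre
  set Post := P.dropUntil p hpmem with hPost
  have hPrePath : Pre.IsPath := hPpath.takeUntil hpmem
  have hPostPath : Post.IsPath := hPpath.dropUntil hpmem
  have hPreLen : Pre.length = T.dist x p := tree_path_length hT _ hPrePath
  have hPostLen : Post.length = T.dist p y := tree_path_length hT _ hPostPath
  have hsplit : Pre.length + Post.length = T.dist x y := by
    rw [← Walk.length_append, P.take_spec hpmem, hPlen]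
  obtain ⟨Q, hQpath, hQlen⟩ := hT.isConnected.exists_path_of_dist p z
  -- key claim: interior of Q avoids P
  have hkey : ∀ v ∈ Q.support, v ≠ p → v ∉ P.support := by
    intro v hvQ hvp hvP
    have h1 : (Q.takeUntil v hvQ).length = T.dist p v :=
      tree_path_length hT _ (hQpath.takeUntil hvQ)
    have h2 : (Q.dropUntil v hvQ).length = T.dist v z :=
      tree_path_length hT _ (hQpath.dropUntil hvQ)
    have h3 : (Q.takeUntil v hvQ).length + (Q.dropUntil v hvQ).length = T.dist p z := by
      rw [← Walk.length_append, Q.take_spec hvQ, hQlen]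
    have h4 : 0 < T.dist p v := (hT.isConnected p v).pos_dist_of_ne (Ne.symm hvp)
    have h5 := hpmin v hvP
    omega
  -- x to z
  have hxz : T.dist x p + T.dist p z = T.dist x z := by
    have hpath : (Pre.append Q).IsPath := by
      apply isPath_append_aux hPrePath hQpath
      intro v hv hvQ
      by_contra hne
      exact hkey v hvQ hne (P.support_takeUntil_subset hpmem hv)
    have := tree_path_length hT _ hpath
    rw [Walk.length_append, hPreLen, hQlen] at this
    exact this
  -- y to z
  have hyz : T.dist y p + T.dist p z = T.dist y z := by
    have hpath : (Post.reverse.append Q).IsPath := by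
      apply isPath_append_aux hPostPath.reverse hQpath
      intro v hv hvQ
      by_contra hne
      rw [Walk.support_reverse, List.mem_reverse] at hv
      exact hkey v hvQ hne (P.support_dropUntil_subset hpmem hv)
    have := tree_path_length hT _ hpath
    rw [Walk.length_append, Walk.length_reverse, hPostLen, hQlen] at this
    rw [SimpleGraph.dist_comm]
    exact this
  exact ⟨p, by rw [← hPreLen, ← hPostLen]; exact hsplit, hxz, hyz⟩

end Tree

section Core

variable {V₁ V₂ : Type*} {T₁ : SimpleGraph V₁} {T₂ : SimpleGraph V₂}
    {Γ : Type*} [Group Γ] [MulAction Γ (V₁ × V₂)]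

set_option maxHeartbeats 2000000 in
/-- Core lemma: the restricted convolution bound, proven via a Cauchy–Schwarz
plus an injection argument based on tree medians. -/
lemma core_lemma
    (hT₁ : T₁.IsTree) (hT₂ : T₂.IsTree)
    (hsh : ∀ (c : Γ) (u v : V₁ × V₂), shape T₁ T₂ (c • u) (c • v) = shape T₁ T₂ u v)
    (hst : ∀ x y : V₁ × V₂, ∃! c : Γ, c • x = y)
    (v₀ : V₁ × V₂) (m n r s t₁ t₂ : ℕ)
    (g : MonoidAlgebra ℂ Γ)
    (hg : ∀ c ∈ g.coeff.support, shape T₁ T₂ v₀ (c • v₀) = (m, n))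
    (f : Γ → ℂ)
    (C : Finset Γ) (hC : ∀ c ∈ C, shape T₁ T₂ v₀ (c • v₀) = (t₁, t₂))
    (F' : Finset Γ) (hF' : ∀ a ∈ F', shape T₁ T₂ v₀ (a • v₀) = (r, s)) :
    ∑ c ∈ C, ‖∑ a ∈ F', f a * g.coeff (a⁻¹ * c)‖ ^ 2 ≤
      (∑ a ∈ F', ‖f a‖ ^ 2) * (∑ b ∈ g.coeff.support, ‖g.coeff b‖ ^ 2) := by
  classical
  -- distance invariance
  have hd1 : ∀ (c : Γ) (u v : V₁ × V₂), T₁.dist (c • u).1 (c • v).1 = T₁.dist u.1 v.1 :=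
    fun c u v => congrArg Prod.fst (hsh c u v)
  have hd2 : ∀ (c : Γ) (u v : V₁ × V₂), T₂.dist (c • u).2 (c • v).2 = T₂.dist u.2 v.2 :=
    fun c u v => congrArg Prod.snd (hsh c u v)
  have hshift : ∀ a c : Γ, shape T₁ T₂ v₀ ((a⁻¹ * c) • v₀) = shape T₁ T₂ (a • v₀) (c • v₀) := by
    intro a c
    have h := hsh a v₀ ((a⁻¹ * c) • v₀)
    rw [smul_smul, mul_inv_cancel_left] at h
    exact h.symm
  set A : Γ → Finset Γ := fun c => F'.filter (fun a => a⁻¹ * c ∈ g.coeff.support) with hA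
  -- pointwise Cauchy-Schwarz
  have step2 : ∀ c ∈ C, ‖∑ a ∈ F', f a * g.coeff (a⁻¹ * c)‖ ^ 2 ≤
      (∑ a ∈ A c, ‖f a‖ ^ 2) * (∑ a ∈ A c, ‖g.coeff (a⁻¹ * c)‖ ^ 2) := by
    intro c _
    have hres : ∑ a ∈ A c, f a * g.coeff (a⁻¹ * c) = ∑ a ∈ F', f a * g.coeff (a⁻¹ * c) := by
      apply Finset.sum_filter_of_ne
      intro a _ hne
      by_contra hmem
      rw [Finsupp.notMem_support_iff.mp hmem, mul_zero] at hne
      exact hne rfl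
    rw [← hres]
    calc ‖∑ a ∈ A c, f a * g.coeff (a⁻¹ * c)‖ ^ 2
        ≤ (∑ a ∈ A c, ‖f a‖ * ‖g.coeff (a⁻¹ * c)‖) ^ 2 := by
          apply pow_le_pow_left₀ (norm_nonneg _)
          refine le_trans (norm_sum_le _ _) (le_of_eq (Finset.sum_congr rfl ?_))
          intro a _; exact norm_mul _ _
      _ ≤ (∑ a ∈ A c, ‖f a‖ ^ 2) * (∑ a ∈ A c, ‖g.coeff (a⁻¹ * c)‖ ^ 2) :=
          Finset.sum_mul_sq_le_sq_mul_sq _ _ _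
  refine le_trans (Finset.sum_le_sum step2) ?_
  -- expand into triple sum over a sigma finset
  have hexp : ∀ c ∈ C, (∑ a ∈ A c, ‖f a‖ ^ 2) * (∑ a ∈ A c, ‖g.coeff (a⁻¹ * c)‖ ^ 2)
      = ∑ y ∈ A c ×ˢ A c, ‖f y.1‖ ^ 2 * ‖g.coeff (y.2⁻¹ * c)‖ ^ 2 := by
    intro c _
    rw [Finset.sum_mul_sum, Finset.sum_product]
  rw [Finset.sum_congr rfl hexp]
  set D := C.sigma (fun c => A c ×ˢ A c) with hD
  set e : (Σ _ : Γ, Γ × Γ) → Γ × Γ := fun x => (x.2.1, x.2.2⁻¹ * x.1) with he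
  set H : Γ × Γ → ℝ := fun y => ‖f y.1‖ ^ 2 * ‖g.coeff y.2‖ ^ 2 with hH
  have hsig : ∑ c ∈ C, ∑ y ∈ A c ×ˢ A c, ‖f y.1‖ ^ 2 * ‖g.coeff (y.2⁻¹ * c)‖ ^ 2
      = ∑ x ∈ D, H (e x) := by
    rw [hD, Finset.sum_sigma]
  rw [hsig]
  -- injectivity of e on D
  have hinj : ∀ x ∈ D, ∀ x' ∈ D, e x = e x' → x = x' := by
    rintro ⟨c, a, a1⟩ hx ⟨d, a0, a2⟩ hx' heq
    simp only [hD, Finset.mem_sigma, Finset.mem_product, hA, Finset.mem_filter] at hx hx'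
    obtain ⟨hcC, ⟨haF, hab⟩, ha1F, ha1b⟩ := hx
    obtain ⟨hdC, ⟨ha0F, ha0b⟩, ha2F, ha2b⟩ := hx'
    simp only [he, Prod.mk.injEq] at heq
    obtain ⟨haa0, hbb⟩ := heq
    subst haa0
    have pe : ∀ {x y : V₁ × V₂} {j k : ℕ}, shape T₁ T₂ x y = (j, k) →
        T₁.dist x.1 y.1 = j ∧ T₂.dist x.2 y.2 = k := by
      intro x y j k h
      exact ⟨congrArg Prod.fst h, congrArg Prod.snd h⟩
    obtain ⟨shc_1, shc_2⟩ := pe (hC c hcC)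
    obtain ⟨shd_1, shd_2⟩ := pe (hC d hdC)
    obtain ⟨sha_1, sha_2⟩ := pe (hF' a haF)
    obtain ⟨sha1_1, sha1_2⟩ := pe (hF' a1 ha1F)
    obtain ⟨sha2_1, sha2_2⟩ := pe (hF' a2 ha2F)
    obtain ⟨shb_1, shb_2⟩ := pe (show shape T₁ T₂ (a • v₀) (c • v₀) = (m, n) by
      rw [← hshift a c]; exact hg _ hab)
    obtain ⟨shb'_1, shb'_2⟩ := pe (show shape T₁ T₂ (a • v₀) (d • v₀) = (m, n) by
      rw [← hshift a d]; exact hg _ ha0b)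
    obtain ⟨shA1_1, shA1_2⟩ := pe (show shape T₁ T₂ (a1 • v₀) (c • v₀) = (m, n) by
      rw [← hshift a1 c]; exact hg _ ha1b)
    obtain ⟨shA2_1, shA2_2⟩ := pe (show shape T₁ T₂ (a2 • v₀) (d • v₀) = (m, n) by
      rw [← hshift a2 d]; exact hg _ ha2b)
    obtain ⟨p₁, hp₁u, hp₁w, hp₁uw⟩ := tree_median hT₁ v₀.1 (a • v₀).1 (c • v₀).1
    obtain ⟨p₂, hp₂u, hp₂w, hp₂uw⟩ := tree_median hT₂ v₀.2 (a • v₀).2 (c • v₀).2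
    obtain ⟨q₁, hq₁u, hq₁w, hq₁uw⟩ := tree_median hT₁ v₀.1 (a • v₀).1 (d • v₀).1
    obtain ⟨q₂, hq₂u, hq₂w, hq₂uw⟩ := tree_median hT₂ v₀.2 (a • v₀).2 (d • v₀).2
    have hp₁q₁ : p₁ = q₁ := by
      apply tree_between_unique hT₁ (y := (a • v₀).1)
      · exact hp₁u
      · exact hq₁u
      · have c1 : T₁.dist (a • v₀).1 p₁ = T₁.dist p₁ (a • v₀).1 := SimpleGraph.dist_comm
        have c2 : T₁.dist (a • v₀).1 q₁ = T₁.dist q₁ (a • v₀).1 := SimpleGraph.dist_comm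
        omega
    have hp₂q₂ : p₂ = q₂ := by
      apply tree_between_unique hT₂ (y := (a • v₀).2)
      · exact hp₂u
      · exact hq₂u
      · have c1 : T₂.dist (a • v₀).2 p₂ = T₂.dist p₂ (a • v₀).2 := SimpleGraph.dist_comm
        have c2 : T₂.dist (a • v₀).2 q₂ = T₂.dist q₂ (a • v₀).2 := SimpleGraph.dist_comm
        omega
    rw [← hp₁q₁] at hq₁u hq₁w hq₁uw
    rw [← hp₂q₂] at hq₂u hq₂w hq₂uw
    obtain ⟨z₁, hz₁u, hz₁w, hz₁uw⟩ := tree_median hT₁ v₀.1 (a1 • v₀).1 (c • v₀).1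
    obtain ⟨z₂, hz₂u, hz₂w, hz₂uw⟩ := tree_median hT₂ v₀.2 (a1 • v₀).2 (c • v₀).2
    obtain ⟨y₁, hy₁u, hy₁w, hy₁uw⟩ := tree_median hT₁ v₀.1 (a2 • v₀).1 (d • v₀).1
    obtain ⟨y₂, hy₂u, hy₂w, hy₂uw⟩ := tree_median hT₂ v₀.2 (a2 • v₀).2 (d • v₀).2
    have hz₁p : z₁ = p₁ := by
      apply tree_between_unique hT₁ (y := (c • v₀).1)
      · exact hz₁w
      · exact hp₁w
      · have c1 : T₁.dist (a1 • v₀).1 z₁ = T₁.dist z₁ (a1 • v₀).1 := SimpleGraph.dist_comm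
        have c2 : T₁.dist (a • v₀).1 p₁ = T₁.dist p₁ (a • v₀).1 := SimpleGraph.dist_comm
        omega
    have hz₂p : z₂ = p₂ := by
      apply tree_between_unique hT₂ (y := (c • v₀).2)
      · exact hz₂w
      · exact hp₂w
      · have c1 : T₂.dist (a1 • v₀).2 z₂ = T₂.dist z₂ (a1 • v₀).2 := SimpleGraph.dist_comm
        have c2 : T₂.dist (a • v₀).2 p₂ = T₂.dist p₂ (a • v₀).2 := SimpleGraph.dist_comm
        omega
    have hy₁p : y₁ = p₁ := by
      apply tree_between_unique hT₁ (y := (d • v₀).1)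
      · exact hy₁w
      · exact hq₁w
      · have c1 : T₁.dist (a2 • v₀).1 y₁ = T₁.dist y₁ (a2 • v₀).1 := SimpleGraph.dist_comm
        have c2 : T₁.dist (a • v₀).1 p₁ = T₁.dist p₁ (a • v₀).1 := SimpleGraph.dist_comm
        omega
    have hy₂p : y₂ = p₂ := by
      apply tree_between_unique hT₂ (y := (d • v₀).2)
      · exact hy₂w
      · exact hq₂w
      · have c1 : T₂.dist (a2 • v₀).2 y₂ = T₂.dist y₂ (a2 • v₀).2 := SimpleGraph.dist_comm
        have c2 : T₂.dist (a • v₀).2 p₂ = T₂.dist p₂ (a • v₀).2 := SimpleGraph.dist_comm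
        omega
    rw [hz₁p] at hz₁u hz₁w hz₁uw
    rw [hz₂p] at hz₂u hz₂w hz₂uw
    rw [hy₁p] at hy₁u hy₁w hy₁uw
    rw [hy₂p] at hy₂u hy₂w hy₂uw
    set p : V₁ × V₂ := (p₁, p₂) with hpdef
    have hp1 : p.1 = p₁ := rfl
    have hp2 : p.2 = p₂ := rfl
    have hbmem : (a1⁻¹ * c) ∈ g.coeff.support := ha1b
    obtain ⟨shbv_1, shbv_2⟩ := pe (hg _ hbmem)
    have hbw : (a1⁻¹ * c) • v₀ = a1⁻¹ • (c • v₀) := by rw [smul_smul]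
    have hbw' : (a1⁻¹ * c) • v₀ = a2⁻¹ • (d • v₀) := by rw [hbb, smul_smul]
    have hoqq1 : T₁.dist v₀.1 (a1⁻¹ • p).1 = T₁.dist (a1 • v₀).1 p.1 := by
      have h := hd1 a1⁻¹ (a1 • v₀) p
      rwa [inv_smul_smul] at h
    have hoqq2 : T₂.dist v₀.2 (a1⁻¹ • p).2 = T₂.dist (a1 • v₀).2 p.2 := by
      have h := hd2 a1⁻¹ (a1 • v₀) p
      rwa [inv_smul_smul] at h
    have hqqb1 : T₁.dist (a1⁻¹ • p).1 ((a1⁻¹ * c) • v₀).1 = T₁.dist p.1 (c • v₀).1 := by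
      rw [hbw]; exact hd1 a1⁻¹ p (c • v₀)
    have hqqb2 : T₂.dist (a1⁻¹ • p).2 ((a1⁻¹ * c) • v₀).2 = T₂.dist p.2 (c • v₀).2 := by
      rw [hbw]; exact hd2 a1⁻¹ p (c • v₀)
    have hoqq1' : T₁.dist v₀.1 (a2⁻¹ • p).1 = T₁.dist (a2 • v₀).1 p.1 := by
      have h := hd1 a2⁻¹ (a2 • v₀) p
      rwa [inv_smul_smul] at h
    have hoqq2' : T₂.dist v₀.2 (a2⁻¹ • p).2 = T₂.dist (a2 • v₀).2 p.2 := by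
      have h := hd2 a2⁻¹ (a2 • v₀) p
      rwa [inv_smul_smul] at h
    have hqqb1' : T₁.dist (a2⁻¹ • p).1 ((a1⁻¹ * c) • v₀).1 = T₁.dist p.1 (d • v₀).1 := by
      rw [hbw']; exact hd1 a2⁻¹ p (d • v₀)
    have hqqb2' : T₂.dist (a2⁻¹ • p).2 ((a1⁻¹ * c) • v₀).2 = T₂.dist p.2 (d • v₀).2 := by
      rw [hbw']; exact hd2 a2⁻¹ p (d • v₀)
    have hqeq1 : (a1⁻¹ • p).1 = (a2⁻¹ • p).1 := by
      apply tree_between_unique hT₁ (x := v₀.1) (y := ((a1⁻¹ * c) • v₀).1)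
      · rw [hoqq1, hqqb1, shbv_1, hp1]
        have c1 : T₁.dist (a1 • v₀).1 p₁ = T₁.dist p₁ (a1 • v₀).1 := SimpleGraph.dist_comm
        omega
      · rw [hoqq1', hqqb1', shbv_1, hp1]
        have c1 : T₁.dist (a2 • v₀).1 p₁ = T₁.dist p₁ (a2 • v₀).1 := SimpleGraph.dist_comm
        omega
      · rw [hoqq1, hoqq1', hp1]
        have c1 : T₁.dist (a1 • v₀).1 p₁ = T₁.dist p₁ (a1 • v₀).1 := SimpleGraph.dist_comm
        have c2 : T₁.dist (a2 • v₀).1 p₁ = T₁.dist p₁ (a2 • v₀).1 := SimpleGraph.dist_comm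
        omega
    have hqeq2 : (a1⁻¹ • p).2 = (a2⁻¹ • p).2 := by
      apply tree_between_unique hT₂ (x := v₀.2) (y := ((a1⁻¹ * c) • v₀).2)
      · rw [hoqq2, hqqb2, shbv_2, hp2]
        have c1 : T₂.dist (a1 • v₀).2 p₂ = T₂.dist p₂ (a1 • v₀).2 := SimpleGraph.dist_comm
        omega
      · rw [hoqq2', hqqb2', shbv_2, hp2]
        have c1 : T₂.dist (a2 • v₀).2 p₂ = T₂.dist p₂ (a2 • v₀).2 := SimpleGraph.dist_comm
        omega
      · rw [hoqq2, hoqq2', hp2]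
        have c1 : T₂.dist (a1 • v₀).2 p₂ = T₂.dist p₂ (a1 • v₀).2 := SimpleGraph.dist_comm
        have c2 : T₂.dist (a2 • v₀).2 p₂ = T₂.dist p₂ (a2 • v₀).2 := SimpleGraph.dist_comm
        omega
    have hqeq : a1⁻¹ • p = a2⁻¹ • p := Prod.ext hqeq1 hqeq2
    have ha1q : a1 • (a1⁻¹ • p) = p := by rw [smul_inv_smul]
    have ha2q : a2 • (a1⁻¹ • p) = p := by rw [hqeq, smul_inv_smul]
    have ha12 : a1 = a2 := by
      obtain ⟨cc, -, huniq⟩ := hst (a1⁻¹ • p) p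
      rw [huniq a1 ha1q, huniq a2 ha2q]
    have hcd : c = d := by
      have h := hbb
      rw [ha12] at h
      exact mul_left_cancel h
    subst hcd; subst ha12
    rfl
  have himg : ∑ x ∈ D, H (e x) = ∑ y ∈ D.image e, H y := (Finset.sum_image hinj).symm
  rw [himg]
  have hsub : D.image e ⊆ F' ×ˢ g.coeff.support := by
    intro y hy
    rw [Finset.mem_image] at hy
    obtain ⟨⟨c, a, a'⟩, hx, rfl⟩ := hy
    simp only [hD, Finset.mem_sigma, Finset.mem_product, hA, Finset.mem_filter] at hx
    exact Finset.mem_product.mpr ⟨hx.2.1.1, hx.2.2.2⟩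
  refine le_trans (Finset.sum_le_sum_of_subset_of_nonneg hsub ?_) (le_of_eq ?_)
  · intro y _ _
    positivity
  · rw [Finset.sum_product]
    rw [Finset.sum_mul_sum]

end Core

/-- Vanishing/compatibility lemma: if there is a group element `a` of shape `(r,s)`
with `a⁻¹c` of shape `(m,n)` and `c` of shape `(t₁,t₂)`, then the shapes satisfy
the parity/triangle constraints. -/
lemma vanish_lemma {V₁ V₂ : Type*} {T₁ : SimpleGraph V₁} {T₂ : SimpleGraph V₂}
    {Γ : Type*} [Group Γ] [MulAction Γ (V₁ × V₂)]
    (hT₁ : T₁.IsTree) (hT₂ : T₂.IsTree)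
    (hsh : ∀ (c : Γ) (u v : V₁ × V₂), shape T₁ T₂ (c • u) (c • v) = shape T₁ T₂ u v)
    (v₀ : V₁ × V₂) {m n r s t₁ t₂ : ℕ} {a c : Γ}
    (sha : shape T₁ T₂ v₀ (a • v₀) = (r, s))
    (shc : shape T₁ T₂ v₀ (c • v₀) = (t₁, t₂))
    (shb : shape T₁ T₂ v₀ ((a⁻¹ * c) • v₀) = (m, n)) :
    ∃ k₁, k₁ ≤ m ∧ ∃ k₂, k₂ ≤ n ∧ r + m = t₁ + 2 * k₁ ∧ s + n = t₂ + 2 * k₂ := by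
  have h := hsh a v₀ ((a⁻¹ * c) • v₀)
  rw [smul_smul, mul_inv_cancel_left, shb] at h
  have pe : ∀ {x y : V₁ × V₂} {j k : ℕ}, shape T₁ T₂ x y = (j, k) →
      T₁.dist x.1 y.1 = j ∧ T₂.dist x.2 y.2 = k := by
    intro x y j k hh
    exact ⟨congrArg Prod.fst hh, congrArg Prod.snd hh⟩
  obtain ⟨sha_1, sha_2⟩ := pe sha
  obtain ⟨shc_1, shc_2⟩ := pe shc
  obtain ⟨shb_1, shb_2⟩ := pe h
  obtain ⟨p₁, hp₁u, hp₁w, hp₁uw⟩ := tree_median hT₁ v₀.1 (a • v₀).1 (c • v₀).1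
  obtain ⟨p₂, hp₂u, hp₂w, hp₂uw⟩ := tree_median hT₂ v₀.2 (a • v₀).2 (c • v₀).2
  have c1 : T₁.dist (a • v₀).1 p₁ = T₁.dist p₁ (a • v₀).1 := SimpleGraph.dist_comm
  have c2 : T₂.dist (a • v₀).2 p₂ = T₂.dist p₂ (a • v₀).2 := SimpleGraph.dist_comm
  refine ⟨T₁.dist p₁ (a • v₀).1, by omega, T₂.dist p₂ (a • v₀).2, by omega, by omega, by omega⟩

set_option maxHeartbeats 2000000 in
/-- Haagerup's inequality for an `Ã₁×Ã₁` group, i.e. a group of shape-preserving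
bijections acting simply transitively on the vertices of a product of two trees:
if `g` is supported on elements of shape `(m,n)`, then
`‖f * g‖₂ ≤ (m+1)(n+1) ‖f‖₂ ‖g‖₂`. -/
theorem haagerup_inequality_A1xA1_group {V₁ V₂ : Type*}
    (T₁ : SimpleGraph V₁) (T₂ : SimpleGraph V₂)
    (hT₁ : T₁.IsTree) (hT₂ : T₂.IsTree)
    {Γ : Type*} [Group Γ] [MulAction Γ (V₁ × V₂)]
    (hsh : ∀ (c : Γ) (u v : V₁ × V₂), shape T₁ T₂ (c • u) (c • v) = shape T₁ T₂ u v)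
    (hst : ∀ x y : V₁ × V₂, ∃! c : Γ, c • x = y)
    (v₀ : V₁ × V₂) (m n : ℕ)
    (g : MonoidAlgebra ℂ Γ)
    (hg : ∀ c ∈ g.coeff.support, shape T₁ T₂ v₀ (c • v₀) = (m, n))
    (f : MonoidAlgebra ℂ Γ) :
    l2norm (f * g) ≤ (m + 1 : ℝ) * (n + 1 : ℝ) * l2norm f * l2norm g := by
  classical
  set Sh : Γ → ℕ × ℕ := fun c => shape T₁ T₂ v₀ (c • v₀) with hSh
  set F := f.coeff.support with hF
  set G := g.coeff.support with hG
  set U := (f * g).coeff.support with hU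
  set S := F.image Sh with hS
  set TT := U.image Sh with hTT
  set K := (Finset.range (m + 1)) ×ˢ (Finset.range (n + 1)) with hK
  set M : ℝ := ((m : ℝ) + 1) * ((n : ℝ) + 1) with hM
  have hM0 : 0 ≤ M := by positivity
  set Compat : ℕ × ℕ → ℕ × ℕ → Prop := fun t rs =>
    ∃ k₁, k₁ ≤ m ∧ ∃ k₂, k₂ ≤ n ∧ rs.1 + m = t.1 + 2 * k₁ ∧ rs.2 + n = t.2 + 2 * k₂
    with hCompat
  set P : ℕ × ℕ → Γ → ℂ := fun rs c => ∑ a ∈ F.filter (fun a => Sh a = rs), f.coeff a * g.coeff (a⁻¹ * c)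
    with hP
  set Bf : ℕ × ℕ → ℝ := fun rs => ∑ a ∈ F.filter (fun a => Sh a = rs), ‖f.coeff a‖ ^ 2 with hBf
  set Ng : ℝ := ∑ b ∈ G, ‖g.coeff b‖ ^ 2 with hNg
  set Nf : ℝ := ∑ a ∈ F, ‖f.coeff a‖ ^ 2 with hNf
  have hNf0 : 0 ≤ Nf := Finset.sum_nonneg fun a _ => by positivity
  have hNg0 : 0 ≤ Ng := Finset.sum_nonneg fun a _ => by positivity
  have hBf0 : ∀ rs, 0 ≤ Bf rs := fun rs => Finset.sum_nonneg fun a _ => by positivity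
  have hKcard : (K.card : ℝ) = M := by
    rw [hK, Finset.card_product, Finset.card_range, Finset.card_range, hM]
    push_cast; ring
  -- pointwise formula for the convolution
  have hmulapp : ∀ c : Γ, (f * g).coeff c = ∑ a ∈ F, f.coeff a * g.coeff (a⁻¹ * c) := by
    intro c
    rw [MonoidAlgebra.coeff_mul, Finsupp.sum]
    refine Finset.sum_congr rfl fun a _ => ?_
    rw [Finsupp.sum, Finset.sum_eq_single (a⁻¹ * c)]
    · simp
    · intro b _ hb; rw [if_neg]; intro h; apply hb; rw [← h, inv_mul_cancel_left]
    · intro h; rw [Finsupp.notMem_support_iff.mp h]; simp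
  -- the main quadratic estimate
  have key : ∑ c ∈ U, ‖(f * g).coeff c‖ ^ 2 ≤ M ^ 2 * (Nf * Ng) := by
    have hsplitU : ∑ c ∈ U, ‖(f * g).coeff c‖ ^ 2
        = ∑ t ∈ TT, ∑ c ∈ U.filter (fun c => Sh c = t), ‖(f * g).coeff c‖ ^ 2 :=
      (Finset.sum_fiberwise_of_maps_to (fun c hc => Finset.mem_image_of_mem Sh hc) _).symm
    -- per-shape-class pointwise bound
    have hper : ∀ t ∈ TT, ∑ c ∈ U.filter (fun c => Sh c = t), ‖(f * g).coeff c‖ ^ 2 ≤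
        M * ∑ rs ∈ S.filter (fun rs => Compat t rs),
          ∑ c ∈ U.filter (fun c => Sh c = t), ‖P rs c‖ ^ 2 := by
      intro t _
      have hcard : ((S.filter (fun rs => Compat t rs)).card : ℝ) ≤ M := by
        have hc1 : (S.filter (fun rs => Compat t rs)).card ≤ K.card := by
          apply Finset.card_le_card_of_injOn
            (fun rs => ((rs.1 + m - t.1) / 2, (rs.2 + n - t.2) / 2))
          · intro rs hrs
            rw [Finset.mem_coe, Finset.mem_filter] at hrs
            obtain ⟨-, k₁, hk₁, k₂, hk₂, e₁, e₂⟩ := hrs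
            rw [Finset.mem_coe, hK, Finset.mem_product, Finset.mem_range, Finset.mem_range]
            dsimp only
            constructor
            · have : (rs.1 + m - t.1) / 2 = k₁ := by omega
              omega
            · have : (rs.2 + n - t.2) / 2 = k₂ := by omega
              omega
          · intro rs hrs rs' hrs' hee
            simp only [Finset.coe_filter, Set.mem_setOf_eq] at hrs hrs'
            obtain ⟨-, k₁, hk₁, k₂, hk₂, e₁, e₂⟩ := hrs
            obtain ⟨-, k₁', hk₁', k₂', hk₂', e₁', e₂'⟩ := hrs'
            have h1 : (rs.1 + m - t.1) / 2 = (rs'.1 + m - t.1) / 2 :=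
              congrArg Prod.fst hee
            have h2 : (rs.2 + n - t.2) / 2 = (rs'.2 + n - t.2) / 2 :=
              congrArg Prod.snd hee
            have : rs.1 = rs'.1 := by omega
            have : rs.2 = rs'.2 := by omega
            exact Prod.ext ‹rs.1 = rs'.1› ‹rs.2 = rs'.2›
        calc ((S.filter (fun rs => Compat t rs)).card : ℝ)
            ≤ (K.card : ℝ) := by exact_mod_cast hc1
          _ = M := hKcard
      have hpoint : ∀ c ∈ U.filter (fun c => Sh c = t), ‖(f * g).coeff c‖ ^ 2 ≤
          M * ∑ rs ∈ S.filter (fun rs => Compat t rs), ‖P rs c‖ ^ 2 := by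
        intro c hc
        rw [Finset.mem_filter] at hc
        have hshc : shape T₁ T₂ v₀ (c • v₀) = (t.1, t.2) := by
          rw [← hc.2]
        have h1 : (f * g).coeff c = ∑ rs ∈ S.filter (fun rs => Compat t rs), P rs c := by
          rw [hmulapp c,
            ← Finset.sum_fiberwise_of_maps_to
              (fun a ha => Finset.mem_image_of_mem Sh ha) (fun a => f.coeff a * g.coeff (a⁻¹ * c))]
          refine (Finset.sum_filter_of_ne ?_).symm
          intro rs _ hne
          obtain ⟨a, ha, hane⟩ := Finset.exists_ne_zero_of_sum_ne_zero hne
          rw [Finset.mem_filter] at ha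
          have hgne : g.coeff (a⁻¹ * c) ≠ 0 := fun hz => hane (by rw [hz, mul_zero])
          have hbmem : a⁻¹ * c ∈ g.coeff.support := Finsupp.mem_support_iff.mpr hgne
          have hsha : shape T₁ T₂ v₀ (a • v₀) = (rs.1, rs.2) := by
            rw [← ha.2]
          exact vanish_lemma hT₁ hT₂ hsh v₀ hsha hshc (hg _ hbmem)
        calc ‖(f * g).coeff c‖ ^ 2
            = ‖∑ rs ∈ S.filter (fun rs => Compat t rs), P rs c‖ ^ 2 := by rw [h1]
          _ ≤ (∑ rs ∈ S.filter (fun rs => Compat t rs), ‖P rs c‖) ^ 2 := by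
              apply pow_le_pow_left₀ (norm_nonneg _)
              exact norm_sum_le _ _
          _ ≤ ((S.filter (fun rs => Compat t rs)).card : ℝ) *
              ∑ rs ∈ S.filter (fun rs => Compat t rs), ‖P rs c‖ ^ 2 := by
              exact_mod_cast sq_sum_le_card_mul_sum_sq
                (s := S.filter (fun rs => Compat t rs)) (f := fun rs => ‖P rs c‖)
          _ ≤ M * ∑ rs ∈ S.filter (fun rs => Compat t rs), ‖P rs c‖ ^ 2 := by
              apply mul_le_mul_of_nonneg_right hcard
              exact Finset.sum_nonneg fun rs _ => by positivity
      calc ∑ c ∈ U.filter (fun c => Sh c = t), ‖(f * g).coeff c‖ ^ 2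
          ≤ ∑ c ∈ U.filter (fun c => Sh c = t),
              M * ∑ rs ∈ S.filter (fun rs => Compat t rs), ‖P rs c‖ ^ 2 :=
            Finset.sum_le_sum hpoint
        _ = M * ∑ c ∈ U.filter (fun c => Sh c = t),
              ∑ rs ∈ S.filter (fun rs => Compat t rs), ‖P rs c‖ ^ 2 := by
            rw [Finset.mul_sum]
        _ = M * ∑ rs ∈ S.filter (fun rs => Compat t rs),
              ∑ c ∈ U.filter (fun c => Sh c = t), ‖P rs c‖ ^ 2 := by
            rw [Finset.sum_comm]
    -- core bound for each (t, rs)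
    have hcore : ∀ t ∈ TT, ∀ rs ∈ S.filter (fun rs => Compat t rs),
        ∑ c ∈ U.filter (fun c => Sh c = t), ‖P rs c‖ ^ 2 ≤ Bf rs * Ng := by
      intro t _ rs _
      apply core_lemma hT₁ hT₂ hsh hst v₀ m n rs.1 rs.2 t.1 t.2 g hg f.coeff
      · intro c hc
        rw [Finset.mem_filter] at hc
        rw [← hc.2]
      · intro a ha
        rw [Finset.mem_filter] at ha
        rw [← ha.2]
    -- counting the fibers
    have hcount : ∑ t ∈ TT, ∑ rs ∈ S.filter (fun rs => Compat t rs), Bf rs * Ng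
        ≤ M * (Nf * Ng) := by
      set W := (TT ×ˢ S).filter (fun x => Compat x.1 x.2) with hW
      have stepA : ∑ t ∈ TT, ∑ rs ∈ S.filter (fun rs => Compat t rs), Bf rs * Ng
          = ∑ x ∈ W, Bf x.2 * Ng := by
        rw [hW, Finset.sum_filter, Finset.sum_product]
        exact Finset.sum_congr rfl fun t _ => Finset.sum_filter _ _
      set e2 : (ℕ × ℕ) × (ℕ × ℕ) → (ℕ × ℕ) × (ℕ × ℕ) := fun x =>
        (x.2, ((x.2.1 + m - x.1.1) / 2, (x.2.2 + n - x.1.2) / 2)) with he2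
      have hinj2 : ∀ x ∈ W, ∀ x' ∈ W, e2 x = e2 x' → x = x' := by
        intro x hx x' hx' hee
        rw [hW, Finset.mem_filter] at hx hx'
        have hcx := hx.2
        have hcx' := hx'.2
        simp only [hCompat] at hcx hcx'
        obtain ⟨k₁, hk₁, k₂, hk₂, e₁, e₂⟩ := hcx
        obtain ⟨k₁', hk₁', k₂', hk₂', e₁', e₂'⟩ := hcx'
        simp only [he2, Prod.mk.injEq] at hee
        obtain ⟨hrs, hk⟩ := hee
        obtain ⟨hka, hkb⟩ := hk
        have hx21 : x.2.1 = x'.2.1 := congrArg Prod.fst hrs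
        have hx22 : x.2.2 = x'.2.2 := congrArg Prod.snd hrs
        have ht1 : x.1.1 = x'.1.1 := by omega
        have ht2 : x.1.2 = x'.1.2 := by omega
        exact Prod.ext (Prod.ext ht1 ht2) hrs
      have stepB : ∑ x ∈ W, Bf x.2 * Ng = ∑ y ∈ W.image e2, Bf y.1 * Ng := by
        rw [Finset.sum_image hinj2]
      have stepC : ∑ y ∈ W.image e2, Bf y.1 * Ng ≤ ∑ y ∈ S ×ˢ K, Bf y.1 * Ng := by
        apply Finset.sum_le_sum_of_subset_of_nonneg
        · intro y hy
          rw [Finset.mem_image] at hy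
          obtain ⟨x, hx, rfl⟩ := hy
          rw [hW, Finset.mem_filter, Finset.mem_product] at hx
          obtain ⟨⟨-, hxS⟩, k₁, hk₁, k₂, hk₂, e₁, e₂⟩ := hx
          rw [Finset.mem_product]
          refine ⟨hxS, ?_⟩
          rw [hK, Finset.mem_product, Finset.mem_range, Finset.mem_range]
          simp only [he2]
          constructor
          · omega
          · omega
        · intro y _ _
          have := hBf0 y.1
          positivity
      have stepD : ∑ y ∈ S ×ˢ K, Bf y.1 * Ng = M * (Nf * Ng) := by
        rw [Finset.sum_product]
        have : ∀ rs ∈ S, ∑ _k ∈ K, Bf rs * Ng = M * (Bf rs * Ng) := by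
          intro rs _
          rw [Finset.sum_const, nsmul_eq_mul, hKcard]
        rw [Finset.sum_congr rfl this, ← Finset.mul_sum]
        congr 1
        rw [← Finset.sum_mul]
        congr 1
        rw [hNf]
        exact Finset.sum_fiberwise_of_maps_to (fun a ha => Finset.mem_image_of_mem Sh ha) _
      calc ∑ t ∈ TT, ∑ rs ∈ S.filter (fun rs => Compat t rs), Bf rs * Ng
          = ∑ x ∈ W, Bf x.2 * Ng := stepA
        _ = ∑ y ∈ W.image e2, Bf y.1 * Ng := stepB
        _ ≤ ∑ y ∈ S ×ˢ K, Bf y.1 * Ng := stepC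
        _ = M * (Nf * Ng) := stepD
    -- assemble
    calc ∑ c ∈ U, ‖(f * g).coeff c‖ ^ 2
        = ∑ t ∈ TT, ∑ c ∈ U.filter (fun c => Sh c = t), ‖(f * g).coeff c‖ ^ 2 := hsplitU
      _ ≤ ∑ t ∈ TT, M * ∑ rs ∈ S.filter (fun rs => Compat t rs),
            ∑ c ∈ U.filter (fun c => Sh c = t), ‖P rs c‖ ^ 2 :=
          Finset.sum_le_sum hper
      _ = M * ∑ t ∈ TT, ∑ rs ∈ S.filter (fun rs => Compat t rs),
            ∑ c ∈ U.filter (fun c => Sh c = t), ‖P rs c‖ ^ 2 := by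
          rw [Finset.mul_sum]
      _ ≤ M * ∑ t ∈ TT, ∑ rs ∈ S.filter (fun rs => Compat t rs), Bf rs * Ng := by
          apply mul_le_mul_of_nonneg_left _ hM0
          apply Finset.sum_le_sum
          intro t ht
          exact Finset.sum_le_sum (hcore t ht)
      _ ≤ M * (M * (Nf * Ng)) := mul_le_mul_of_nonneg_left hcount hM0
      _ = M ^ 2 * (Nf * Ng) := by ring
  -- take square roots
  have hL : l2norm (f * g) = Real.sqrt (∑ c ∈ U, ‖(f * g).coeff c‖ ^ 2) := rfl
  have hLf : l2norm f = Real.sqrt Nf := rfl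
  have hLg : l2norm g = Real.sqrt Ng := rfl
  rw [hL, hLf, hLg]
  calc Real.sqrt (∑ c ∈ U, ‖(f * g).coeff c‖ ^ 2)
      ≤ Real.sqrt (M ^ 2 * (Nf * Ng)) := Real.sqrt_le_sqrt key
    _ = M * (Real.sqrt Nf * Real.sqrt Ng) := by
        rw [Real.sqrt_mul (by positivity), Real.sqrt_mul hNf0, Real.sqrt_sq hM0]
    _ = (m + 1 : ℝ) * (n + 1 : ℝ) * Real.sqrt Nf * Real.sqrt Ng := by
        rw [hM]; ring
end

section
/- Let I and J be index sets and let T, S : ℓ²(I) → ℓ²(J) be bounded linear operators whose matrix coefficients t_{ji} = ⟨T δ_i, δ_j⟩ and s_{ji} = ⟨S δ_i, δ_j⟩ are real and satisfy 0 ≤ t_{ji} ≤ s_{ji} for all i ∈ I and j ∈ J. Then ‖T‖ ≤ ‖S‖. -/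
open scoped ComplexOrder InnerProductSpace

private lemma inner_sum_single_aux
    {I J : Type*} [DecidableEq I] [DecidableEq J]
    (U : lp (fun _ : I => ℂ) 2 →L[ℂ] lp (fun _ : J => ℂ) 2)
    (F : Finset I) (G : Finset J) (a : I → ℂ) (b : J → ℂ) :
    ⟪U (∑ i ∈ F, lp.single 2 i (a i)), ∑ j ∈ G, lp.single 2 j (b j)⟫_ℂ =
      ∑ i ∈ F, ∑ j ∈ G, (starRingEnd ℂ) (a i) * b j *
        ⟪U (lp.single 2 i (1 : ℂ)), lp.single 2 j (1 : ℂ)⟫_ℂ := by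
  have ha : ∀ i, lp.single (E := fun _ : I => ℂ) 2 i (a i) = a i • lp.single 2 i (1 : ℂ) :=
    fun i => by rw [← lp.single_smul, smul_eq_mul, mul_one]
  have hb : ∀ j, lp.single (E := fun _ : J => ℂ) 2 j (b j) = b j • lp.single 2 j (1 : ℂ) :=
    fun j => by rw [← lp.single_smul, smul_eq_mul, mul_one]
  simp_rw [ha, hb]
  simp_rw [map_sum, map_smul]
  simp_rw [sum_inner, inner_sum, inner_smul_left, inner_smul_right]
  simp_rw [mul_assoc]

private lemma norm_sum_single_ofReal
    {I : Type*} [DecidableEq I] (F : Finset I) (a : I → ℂ) :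
    ‖∑ i ∈ F, lp.single (E := fun _ : I => ℂ) 2 i ((‖a i‖ : ℂ))‖ =
      ‖∑ i ∈ F, lp.single (E := fun _ : I => ℂ) 2 i (a i)‖ := by
  have h2 : 0 < (2 : ENNReal).toReal := by norm_num
  have e1 := lp.norm_sum_single (E := fun _ : I => ℂ) h2 (fun i => ((‖a i‖ : ℂ))) F
  have e2 := lp.norm_sum_single (E := fun _ : I => ℂ) h2 a F
  have key : ‖∑ i ∈ F, lp.single (E := fun _ : I => ℂ) 2 i ((‖a i‖ : ℂ))‖ ^ (2 : ENNReal).toReal =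
      ‖∑ i ∈ F, lp.single (E := fun _ : I => ℂ) 2 i (a i)‖ ^ (2 : ENNReal).toReal := by
    rw [e1, e2]
    congr 1
    ext i
    simp
  rw [show (2 : ENNReal).toReal = (2 : ℝ) by norm_num] at key
  have n1 : (0:ℝ) ≤ ‖∑ i ∈ F, lp.single (E := fun _ : I => ℂ) 2 i ((‖a i‖ : ℂ))‖ := norm_nonneg _
  have n2 : (0:ℝ) ≤ ‖∑ i ∈ F, lp.single (E := fun _ : I => ℂ) 2 i (a i)‖ := norm_nonneg _
  rw [show (2:ℝ) = ((2:ℕ):ℝ) by norm_num, Real.rpow_natCast, Real.rpow_natCast] at key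
  nlinarith [key, n1, n2]

private lemma key_finite
    {I J : Type*} [DecidableEq I] [DecidableEq J]
    (T S : lp (fun _ : I => ℂ) 2 →L[ℂ] lp (fun _ : J => ℂ) 2)
    (t s : I → J → ℝ)
    (hT : ∀ i j, ⟪T (lp.single 2 i (1 : ℂ)), lp.single 2 j (1 : ℂ)⟫_ℂ = ((t i j : ℝ) : ℂ))
    (hS : ∀ i j, ⟪S (lp.single 2 i (1 : ℂ)), lp.single 2 j (1 : ℂ)⟫_ℂ = ((s i j : ℝ) : ℂ))
    (ht0 : ∀ i j, 0 ≤ t i j) (hts : ∀ i j, t i j ≤ s i j)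
    (F : Finset I) (G : Finset J) (a : I → ℂ) (b : J → ℂ) :
    ‖⟪T (∑ i ∈ F, lp.single 2 i (a i)), ∑ j ∈ G, lp.single 2 j (b j)⟫_ℂ‖ ≤
      ‖S‖ * ‖∑ i ∈ F, lp.single 2 i (a i)‖ * ‖∑ j ∈ G, lp.single 2 j (b j)‖ := by
  calc ‖⟪T (∑ i ∈ F, lp.single 2 i (a i)), ∑ j ∈ G, lp.single 2 j (b j)⟫_ℂ‖
      = ‖∑ i ∈ F, ∑ j ∈ G, (starRingEnd ℂ) (a i) * b j * ((t i j : ℝ) : ℂ)‖ := by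
        rw [inner_sum_single_aux]; simp_rw [hT]
    _ ≤ ∑ i ∈ F, ∑ j ∈ G, ‖(starRingEnd ℂ) (a i) * b j * ((t i j : ℝ) : ℂ)‖ :=
        le_trans (norm_sum_le _ _) (Finset.sum_le_sum fun i _ => norm_sum_le _ _)
    _ = ∑ i ∈ F, ∑ j ∈ G, ‖a i‖ * ‖b j‖ * t i j := by
        refine Finset.sum_congr rfl fun i _ => Finset.sum_congr rfl fun j _ => ?_
        rw [norm_mul, norm_mul, RCLike.norm_conj, Complex.norm_real,
          Real.norm_of_nonneg (ht0 i j)]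
    _ ≤ ∑ i ∈ F, ∑ j ∈ G, ‖a i‖ * ‖b j‖ * s i j := by
        refine Finset.sum_le_sum fun i _ => Finset.sum_le_sum fun j _ => ?_
        exact mul_le_mul_of_nonneg_left (hts i j) (by positivity)
    _ = (⟪S (∑ i ∈ F, lp.single 2 i ((‖a i‖ : ℂ))),
          ∑ j ∈ G, lp.single 2 j ((‖b j‖ : ℂ))⟫_ℂ).re := by
        rw [inner_sum_single_aux]
        simp_rw [hS, Complex.conj_ofReal, ← Complex.ofReal_mul, Complex.re_sum,
          Complex.ofReal_re]
    _ ≤ ‖⟪S (∑ i ∈ F, lp.single 2 i ((‖a i‖ : ℂ))),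
          ∑ j ∈ G, lp.single 2 j ((‖b j‖ : ℂ))⟫_ℂ‖ := Complex.re_le_norm _
    _ ≤ ‖S (∑ i ∈ F, lp.single 2 i ((‖a i‖ : ℂ)))‖ *
          ‖∑ j ∈ G, lp.single 2 j ((‖b j‖ : ℂ))‖ := norm_inner_le_norm _ _
    _ ≤ (‖S‖ * ‖∑ i ∈ F, lp.single 2 i ((‖a i‖ : ℂ))‖) *
          ‖∑ j ∈ G, lp.single 2 j ((‖b j‖ : ℂ))‖ :=
        mul_le_mul_of_nonneg_right (S.le_opNorm _) (norm_nonneg _)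
    _ = ‖S‖ * ‖∑ i ∈ F, lp.single 2 i (a i)‖ * ‖∑ j ∈ G, lp.single 2 j (b j)‖ := by
        rw [norm_sum_single_ofReal F a, norm_sum_single_ofReal G b, mul_assoc]

/-- Lemma C of Ramagge–Robertson–Steger: if `T, S : ℓ²(I) → ℓ²(J)` are bounded
operators whose matrix coefficients `t_{ji} = ⟨T δᵢ, δⱼ⟩`, `s_{ji} = ⟨S δᵢ, δⱼ⟩`
satisfy `0 ≤ t_{ji} ≤ s_{ji}` (so in particular all are real), then `‖T‖ ≤ ‖S‖`. -/
theorem opNorm_le_opNorm_of_entrywise_le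
    {I J : Type*} [DecidableEq I] [DecidableEq J]
    (T S : lp (fun _ : I => ℂ) 2 →L[ℂ] lp (fun _ : J => ℂ) 2)
    (h : ∀ (i : I) (j : J),
      0 ≤ ⟪T (lp.single 2 i (1 : ℂ)), lp.single 2 j (1 : ℂ)⟫_ℂ ∧
        ⟪T (lp.single 2 i (1 : ℂ)), lp.single 2 j (1 : ℂ)⟫_ℂ ≤
          ⟪S (lp.single 2 i (1 : ℂ)), lp.single 2 j (1 : ℂ)⟫_ℂ) :
    ‖T‖ ≤ ‖S‖ := by
  set t : I → J → ℝ := fun i j => (⟪T (lp.single 2 i (1:ℂ)), lp.single 2 j (1:ℂ)⟫_ℂ).re with htdef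
  set s : I → J → ℝ := fun i j => (⟪S (lp.single 2 i (1:ℂ)), lp.single 2 j (1:ℂ)⟫_ℂ).re with hsdef
  have htim : ∀ i j, (⟪T (lp.single 2 i (1:ℂ)), lp.single 2 j (1:ℂ)⟫_ℂ).im = 0 := fun i j => by
    simpa using (Complex.le_def.mp (h i j).1).2.symm
  have hsim : ∀ i j, (⟪S (lp.single 2 i (1:ℂ)), lp.single 2 j (1:ℂ)⟫_ℂ).im = 0 := fun i j =>
    (Complex.le_def.mp (h i j).2).2.symm.trans (htim i j)
  have hT : ∀ i j, ⟪T (lp.single 2 i (1:ℂ)), lp.single 2 j (1:ℂ)⟫_ℂ = ((t i j : ℝ) : ℂ) :=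
    fun i j => Complex.ext rfl (by simpa using htim i j)
  have hS : ∀ i j, ⟪S (lp.single 2 i (1:ℂ)), lp.single 2 j (1:ℂ)⟫_ℂ = ((s i j : ℝ) : ℂ) :=
    fun i j => Complex.ext rfl (by simpa using hsim i j)
  have ht0 : ∀ i j, 0 ≤ t i j := fun i j => by
    simpa using (Complex.le_def.mp (h i j).1).1
  have hts : ∀ i j, t i j ≤ s i j := fun i j => (Complex.le_def.mp (h i j).2).1
  have main : ∀ (x : lp (fun _ : I => ℂ) 2) (y : lp (fun _ : J => ℂ) 2),
      ‖⟪T x, y⟫_ℂ‖ ≤ ‖S‖ * ‖x‖ * ‖y‖ := by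
    have stepA : ∀ (x : lp (fun _ : I => ℂ) 2) (G : Finset J) (b : J → ℂ),
        ‖⟪T x, ∑ j ∈ G, lp.single 2 j (b j)⟫_ℂ‖ ≤
          ‖S‖ * ‖x‖ * ‖∑ j ∈ G, lp.single 2 j (b j)‖ := by
      intro x G b
      have hx : HasSum (fun i => lp.single 2 i (x i)) x :=
        lp.hasSum_single (by norm_num) x
      have c1 : Continuous fun z : lp (fun _ : I => ℂ) 2 =>
          ‖⟪T z, ∑ j ∈ G, lp.single 2 j (b j)⟫_ℂ‖ :=
        (T.continuous.inner continuous_const).norm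
      have c2 : Continuous fun z : lp (fun _ : I => ℂ) 2 =>
          ‖S‖ * ‖z‖ * ‖∑ j ∈ G, lp.single 2 j (b j)‖ :=
        ((continuous_const.mul continuous_norm).mul continuous_const)
      exact le_of_tendsto_of_tendsto' ((c1.tendsto x).comp hx) ((c2.tendsto x).comp hx)
        (fun F => key_finite T S t s hT hS ht0 hts F G (fun i => x i) b)
    intro x y
    have hy : HasSum (fun j => lp.single 2 j (y j)) y :=
      lp.hasSum_single (by norm_num) y
    have c1 : Continuous fun z : lp (fun _ : J => ℂ) 2 => ‖⟪T x, z⟫_ℂ‖ :=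
      (continuous_const.inner continuous_id).norm
    have c2 : Continuous fun z : lp (fun _ : J => ℂ) 2 => ‖S‖ * ‖x‖ * ‖z‖ :=
      continuous_const.mul continuous_norm
    exact le_of_tendsto_of_tendsto' ((c1.tendsto y).comp hy) ((c2.tendsto y).comp hy)
      (fun G => stepA x G (fun j => y j))
  refine T.opNorm_le_bound (norm_nonneg S) fun x => ?_
  have hm := main x (T x)
  rw [inner_self_eq_norm_sq_to_K, norm_pow, RCLike.norm_ofReal, abs_norm] at hm
  nlinarith [norm_nonneg (T x), mul_nonneg (norm_nonneg S) (norm_nonneg x)]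
end

section
/- Let T₁ and T₂ be trees with vertex sets V₁ and V₂, and let Γ be an Ã₁×Ã₁ group, i.e. a group of shape-preserving bijections of V₁×V₂ acting simply transitively on V₁×V₂. Fix a vertex v₀ ∈ V₁×V₂ and define sh(c) = sh(v₀, c·v₀) for c ∈ Γ. Let m₁, m₂, n₁, n₂ ∈ ℕ and let c ∈ Γ with sh(c) = (m₁+m₂, n₁+n₂). Then there exist unique elements a, b ∈ Γ such that c = ab, sh(a) = (m₁,n₁) and sh(b) = (m₂,n₂). -/
open SimpleGraph

/-- Any walk can be split at position `k`. -/
lemma walk_split {V : Type*} {G : SimpleGraph V} {u w : V} (p : G.Walk u w) (k : ℕ)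
    (hk : k ≤ p.length) :
    ∃ (x : V) (q : G.Walk u x) (r : G.Walk x w), q.append r = p ∧ q.length = k := by
  induction p generalizing k with
  | nil =>
    simp only [SimpleGraph.Walk.length_nil, Nat.le_zero] at hk
    subst hk
    exact ⟨_, SimpleGraph.Walk.nil, SimpleGraph.Walk.nil, rfl, rfl⟩
  | @cons a b c h p ih =>
    cases k with
    | zero => exact ⟨a, SimpleGraph.Walk.nil, .cons h p, rfl, rfl⟩
    | succ k =>
      obtain ⟨x, q, r, hqr, hq⟩ := ih k (by simpa using hk)
      exact ⟨x, .cons h q, r, by simp [hqr], by simp [hq]⟩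

/-- In a tree, a geodesic midpoint exists and is unique. -/
lemma tree_mid {V : Type*} {G : SimpleGraph V} (hT : G.IsTree) (u w : V) (m₁ m₂ : ℕ)
    (h : G.dist u w = m₁ + m₂) :
    ∃! x : V, G.dist u x = m₁ ∧ G.dist x w = m₂ := by
  have hconn := hT.isConnected
  obtain ⟨p, hp⟩ := hconn.exists_walk_length_eq_dist u w
  obtain ⟨x, q, r, hqr, hq⟩ := walk_split p m₁ (by omega)
  have hr : r.length = m₂ := by
    have := congrArg SimpleGraph.Walk.length hqr
    simp only [SimpleGraph.Walk.length_append] at this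
    omega
  have hdux : G.dist u x = m₁ := by
    have h1 : G.dist u x ≤ m₁ := hq ▸ SimpleGraph.dist_le q
    have h2 : G.dist x w ≤ m₂ := hr ▸ SimpleGraph.dist_le r
    have := hconn.dist_triangle (u := u) (v := x) (w := w)
    omega
  have hdxw : G.dist x w = m₂ := by
    have h2 : G.dist x w ≤ m₂ := hr ▸ SimpleGraph.dist_le r
    have := hconn.dist_triangle (u := u) (v := x) (w := w)
    omega
  refine ⟨x, ⟨hdux, hdxw⟩, ?_⟩
  -- uniqueness
  have key : ∀ y : V, G.dist u y = m₁ → G.dist y w = m₂ →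
      ∃ (s : G.Walk u w), s.IsPath ∧ s.getVert m₁ = y := by
    intro y h1 h2
    obtain ⟨qy, hqy⟩ := (hconn u y).exists_walk_length_eq_dist
    obtain ⟨ry, hry⟩ := (hconn y w).exists_walk_length_eq_dist
    rw [h1] at hqy; rw [h2] at hry
    refine ⟨qy.append ry, ?_, ?_⟩
    · apply SimpleGraph.Walk.isPath_of_length_eq_dist
      simp [SimpleGraph.Walk.length_append, hqy, hry, h]
    · rw [SimpleGraph.Walk.getVert_append]
      simp [hqy]
  rintro y ⟨hy1, hy2⟩
  obtain ⟨s₁, hs₁, hg₁⟩ := key y hy1 hy2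
  obtain ⟨s₂, hs₂, hg₂⟩ := key x hdux hdxw
  have := (hT.existsUnique_path u w).unique hs₁ hs₂
  rw [← hg₁, ← hg₂, this]

/-- Shape decomposition in an `Ã₁×Ã₁` group: if `Γ` is a group of shape-preserving
bijections acting simply transitively on the vertices of a product of two trees,
`sh(c) = sh(v₀, c • v₀)`, and `sh(c) = (m₁+m₂, n₁+n₂)`, then there is a unique pair
`(a, b)` with `c = a * b`, `sh(a) = (m₁,n₁)` and `sh(b) = (m₂,n₂)`. -/
theorem shape_decomposition_for_group {V₁ V₂ : Type*}
    (T₁ : SimpleGraph V₁) (T₂ : SimpleGraph V₂)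
    (hT₁ : T₁.IsTree) (hT₂ : T₂.IsTree)
    {Γ : Type*} [Group Γ] [MulAction Γ (V₁ × V₂)]
    (hsh : ∀ (c : Γ) (u v : V₁ × V₂), shape T₁ T₂ (c • u) (c • v) = shape T₁ T₂ u v)
    (hst : ∀ x y : V₁ × V₂, ∃! c : Γ, c • x = y)
    (v₀ : V₁ × V₂) (m₁ m₂ n₁ n₂ : ℕ) (c : Γ)
    (hc : shape T₁ T₂ v₀ (c • v₀) = (m₁ + m₂, n₁ + n₂)) :
    ∃! p : Γ × Γ, p.1 * p.2 = c ∧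
      shape T₁ T₂ v₀ (p.1 • v₀) = (m₁, n₁) ∧
      shape T₁ T₂ v₀ (p.2 • v₀) = (m₂, n₂) := by
  simp only [shape, Prod.mk.injEq] at hc
  obtain ⟨hc1, hc2⟩ := hc
  obtain ⟨x₁, ⟨hx1a, hx1b⟩, hx1u⟩ := tree_mid hT₁ v₀.1 (c • v₀).1 m₁ m₂ hc1
  obtain ⟨x₂, ⟨hx2a, hx2b⟩, hx2u⟩ := tree_mid hT₂ v₀.2 (c • v₀).2 n₁ n₂ hc2
  obtain ⟨a, ha, hau⟩ := hst v₀ (x₁, x₂)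
  -- key: for any pair (a', b') satisfying the conditions, a' • v₀ = (x₁, x₂)
  have key : ∀ a' b' : Γ, a' * b' = c →
      shape T₁ T₂ v₀ (a' • v₀) = (m₁, n₁) →
      shape T₁ T₂ v₀ (b' • v₀) = (m₂, n₂) →
      a' • v₀ = (x₁, x₂) := by
    intro a' b' hab h1 h2
    have hmid : shape T₁ T₂ (a' • v₀) (c • v₀) = (m₂, n₂) := by
      rw [← hab, mul_smul, hsh, h2]
    simp only [shape, Prod.mk.injEq] at h1 hmid
    have e1 : (a' • v₀).1 = x₁ := hx1u _ ⟨h1.1, hmid.1⟩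
    have e2 : (a' • v₀).2 = x₂ := hx2u _ ⟨h1.2, hmid.2⟩
    exact Prod.ext e1 e2
  refine ⟨(a, a⁻¹ * c), ⟨by group, ?_, ?_⟩, ?_⟩
  · simp only [shape, ha, Prod.mk.injEq]
    exact ⟨hx1a, hx2a⟩
  · have : shape T₁ T₂ (a • v₀) (a • ((a⁻¹ * c) • v₀)) = shape T₁ T₂ v₀ ((a⁻¹ * c) • v₀) :=
      hsh a _ _
    rw [← this, ha]
    have : a • (a⁻¹ * c) • v₀ = c • v₀ := by rw [← mul_smul]; group
    rw [this]
    simp only [shape, Prod.mk.injEq]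
    exact ⟨hx1b, hx2b⟩
  · rintro ⟨a', b'⟩ ⟨hab, h1, h2⟩
    have hav : a' • v₀ = (x₁, x₂) := key a' b' hab h1 h2
    have ha' : a' = a := hau a' hav
    subst ha'
    have : b' = a'⁻¹ * c := by rw [← hab]; group
    simp [this]
end

section
/- Let Γ be the free group on a set S and for c ∈ Γ let L(c) denote the reduced word length of c. Then Γ satisfies the rapid decay estimate with respect to L: there exist constants C > 0 and s ≥ 0 such that for all finitely supported f, g : Γ → ℂ, ‖f*g‖₂ ≤ C·‖f‖₂·(Σ_{c∈Γ} |g(c)|²·(1+L(c))^{2s})^{1/2}. -/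
open List

namespace FreeGroupRD

variable {S : Type*} [DecidableEq S]

/-- Non-cancellation relation between adjacent letters. -/
def R : (S × Bool) → (S × Bool) → Prop := fun u v => ¬(u.1 = v.1 ∧ u.2 = !v.2)

instance : DecidableRel (R (S := S)) := fun _ _ => instDecidableNot

lemma chain'_of_reduce_eq_self : ∀ {w : List (S × Bool)}, FreeGroup.reduce w = w → List.Chain' R w
  | [], _ => List.isChain_nil
  | [a], _ => List.isChain_singleton a
  | a :: b :: w, h => by
    have hred : FreeGroup.reduce (a :: b :: w) = a :: b :: w := h
    rw [FreeGroup.reduce.cons] at hred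
    rcases hr : FreeGroup.reduce (b :: w) with _ | ⟨hd, tl⟩
    · rw [hr] at hred
      simp at hred
    · rw [hr] at hred
      dsimp only at hred
      by_cases hc : a.1 = hd.1 ∧ a.2 = !hd.2
      · rw [if_pos hc] at hred
        have hlen1 : tl.length = w.length + 2 := by rw [hred]; simp
        have hlen2 : (hd :: tl).length ≤ (b :: w).length := by
          rw [← hr]; exact FreeGroup.Red.length_le FreeGroup.reduce.red
        simp at hlen2
        omega
      · rw [if_neg hc] at hred
        have h1 : hd = b ∧ tl = w := by
          injection hred with h1 h2
          injection h2 with h3 h4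
          exact ⟨h3, h4⟩
        have htail : FreeGroup.reduce (b :: w) = b :: w := by rw [hr, h1.1, h1.2]
        have := chain'_of_reduce_eq_self htail
        exact List.IsChain.cons_cons (by rw [← h1.1]; exact hc) this

lemma reduce_eq_self_of_chain' : ∀ {w : List (S × Bool)}, List.Chain' R w → FreeGroup.reduce w = w
  | [], _ => rfl
  | [a], _ => rfl
  | a :: b :: w, h => by
    have htail : FreeGroup.reduce (b :: w) = b :: w :=
      reduce_eq_self_of_chain' h.tail
    rw [FreeGroup.reduce.cons, htail]
    have hR : R a b := List.isChain_cons_cons.mp h |>.1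
    simp only [R] at hR
    dsimp only
    rw [if_neg hR]

lemma reduce_eq_self_iff_chain' {w : List (S × Bool)} :
    FreeGroup.reduce w = w ↔ List.Chain' R w :=
  ⟨chain'_of_reduce_eq_self, reduce_eq_self_of_chain'⟩

lemma invRev_concat (q : List (S × Bool)) (x : S × Bool) :
    FreeGroup.invRev (q ++ [x]) = (x.1, !x.2) :: FreeGroup.invRev q := by
  simp [FreeGroup.invRev]

/-- Core combinatorial lemma: cancellation structure of the product of two reduced words. -/
lemma reduce_append_aux : ∀ n (wa wb : List (S × Bool)), wa.length ≤ n →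
    List.Chain' R wa → List.Chain' R wb →
    ∃ p q r : List (S × Bool), wa = p ++ q ∧ wb = FreeGroup.invRev q ++ r ∧
      FreeGroup.reduce (wa ++ wb) = p ++ r := by
  intro n
  induction n with
  | zero =>
    intro wa wb hlen ha hb
    have : wa = [] := List.eq_nil_of_length_eq_zero (Nat.le_zero.mp hlen)
    subst this
    exact ⟨[], [], wb, rfl, by simp [FreeGroup.invRev], by
      simpa using reduce_eq_self_of_chain' hb⟩
  | succ n ih =>
    intro wa wb hlen ha hb
    rcases List.eq_nil_or_concat wa with rfl | ⟨wa', x, hwa⟩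
    swap
    rw [List.concat_eq_append] at hwa
    subst hwa
    swap
    · exact ⟨[], [], wb, rfl, by simp [FreeGroup.invRev], by
        simpa using reduce_eq_self_of_chain' hb⟩
    rcases wb with _ | ⟨y, wb'⟩
    · refine ⟨wa' ++ [x], [], [], by simp, by simp [FreeGroup.invRev], by
        simpa using reduce_eq_self_of_chain' ha⟩
    by_cases hc : y = (x.1, !x.2)
    · -- cancellation at the junction
      have hstep : FreeGroup.Red.Step ((wa' ++ [x]) ++ y :: wb') (wa' ++ wb') := by
        subst hc
        have : (wa' ++ [x]) ++ (x.1, !x.2) :: wb' = wa' ++ (x.1, x.2) :: (x.1, !x.2) :: wb' := by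
          simp
        rw [this]
        exact FreeGroup.Red.Step.not
      have hred_eq : FreeGroup.reduce ((wa' ++ [x]) ++ y :: wb') =
          FreeGroup.reduce (wa' ++ wb') := FreeGroup.reduce.Step.eq hstep
      have ha' : List.Chain' R wa' := ha.prefix ⟨[x], rfl⟩
      have hb' : List.Chain' R wb' := hb.tail
      have hlen' : wa'.length ≤ n := by
        have := hlen; simp at this; omega
      obtain ⟨p, q, r, h1, h2, h3⟩ := ih wa' wb' hlen' ha' hb'
      refine ⟨p, q ++ [x], r, by rw [h1, List.append_assoc], ?_, by rw [hred_eq, h3]⟩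
      rw [invRev_concat, ← hc, List.cons_append, ← h2]
    · -- no cancellation: the concatenation is already reduced
      refine ⟨wa' ++ [x], [], y :: wb', by simp, by simp [FreeGroup.invRev], ?_⟩
      have : List.Chain' R ((wa' ++ [x]) ++ y :: wb') := by
        refine ha.append hb ?_
        intro u hu v hv
        simp [List.getLast?_concat] at hu
        simp at hv
        subst hu; subst hv
        intro hcon
        exact hc (Prod.ext hcon.1.symm (by simp [hcon.2]))
      exact reduce_eq_self_of_chain' this

/-- For any `a b` in the free group, reduced words decompose with maximal cancellation. -/
lemma exists_cancel (a b : FreeGroup S) :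
    ∃ p q r : List (S × Bool), a.toWord = p ++ q ∧ b.toWord = FreeGroup.invRev q ++ r ∧
      (a * b).toWord = p ++ r := by
  have ha := chain'_of_reduce_eq_self (FreeGroup.reduce_toWord a)
  have hb := chain'_of_reduce_eq_self (FreeGroup.reduce_toWord b)
  obtain ⟨p, q, r, h1, h2, h3⟩ := reduce_append_aux a.toWord.length a.toWord b.toWord le_rfl ha hb
  refine ⟨p, q, r, h1, h2, ?_⟩
  conv_lhs => rw [← FreeGroup.mk_toWord (x := a), ← FreeGroup.mk_toWord (x := b)]
  rw [FreeGroup.mul_mk, FreeGroup.toWord_mk, h3]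

end FreeGroupRD

namespace FreeGroupRD

variable {S : Type*} [DecidableEq S]

/-- Reduced word length. -/
def len (a : FreeGroup S) : ℕ := a.toWord.length

/-- The amount of cancellation in the product `a * b`. -/
def canc (a b : FreeGroup S) : ℕ := (len a + len b - len (a * b)) / 2

lemma canc_eq_q_length {a b : FreeGroup S} {p q r : List (S × Bool)}
    (h1 : a.toWord = p ++ q) (h2 : b.toWord = FreeGroup.invRev q ++ r)
    (h3 : (a * b).toWord = p ++ r) : canc a b = q.length := by
  have l1 : len a = p.length + q.length := by rw [len, h1, List.length_append]
  have l2 : len b = q.length + r.length := by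
    rw [len, h2, List.length_append, FreeGroup.invRev_length]
  have l3 : len (a * b) = p.length + r.length := by rw [len, h3, List.length_append]
  rw [canc, l1, l2, l3]; omega

lemma canc_le_len_right (a b : FreeGroup S) : canc a b ≤ len b := by
  obtain ⟨p, q, r, h1, h2, h3⟩ := exists_cancel a b
  rw [canc_eq_q_length h1 h2 h3, len, h2, List.length_append, FreeGroup.invRev_length]
  omega

/-- The key uniqueness: `c` is determined by `a`, `b'`, `j` and the common length of
`b` and `b'`. -/
lemma eq_mk_parts {a b a' b' c : FreeGroup S} {j : ℕ}
    (h1 : a * b = c) (h2 : a' * b' = c) (hm : len b = len b')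
    (hja : canc a b = j) (hjb : canc a' b' = j) :
    c = FreeGroup.mk (a.toWord.take (len a - j) ++ b'.toWord.drop j) := by
  obtain ⟨p, q, r, e1, e2, e3⟩ := exists_cancel a b
  obtain ⟨p', q', r', e1', e2', e3'⟩ := exists_cancel a' b'
  rw [h1] at e3
  rw [h2] at e3'
  have hq : q.length = j := by rw [← canc_eq_q_length e1 e2 (h1 ▸ e3), hja]
  have hq' : q'.length = j := by rw [← canc_eq_q_length e1' e2' (h2 ▸ e3'), hjb]
  have hlb : len b = q.length + r.length := by
    rw [len, e2, List.length_append, FreeGroup.invRev_length]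
  have hlb' : len b' = q'.length + r'.length := by
    rw [len, e2', List.length_append, FreeGroup.invRev_length]
  have hrr' : r.length = r'.length := by omega
  have hpp' : p = p' ∧ r = r' := List.append_inj' (e3.symm.trans e3') hrr'
  have htake : a.toWord.take (len a - j) = p := by
    have hla : len a = p.length + q.length := by rw [len, e1, List.length_append]
    rw [e1]
    exact List.take_left' (by omega)
  have hdrop : b'.toWord.drop j = r' := by
    rw [e2']
    exact List.drop_left' (by rw [FreeGroup.invRev_length]; omega)
  rw [htake, hdrop, ← hpp'.2, ← e3, FreeGroup.mk_toWord]

lemma aux1 (a c : FreeGroup S) : a * (a⁻¹ * c) = c := by group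
lemma aux2 (b c : FreeGroup S) : c * b⁻¹ * b = c := by group
lemma aux3 (a c : FreeGroup S) : c * (a⁻¹ * c)⁻¹ = a := by group
lemma aux4 (b c : FreeGroup S) : (c * b⁻¹)⁻¹ * c = b := by group

section Convolution

variable (f g : MonoidAlgebra ℂ (FreeGroup S)) (m j : ℕ)

/-- Left factors contributing to `(f * g).coeff c` with second-factor length `m` and
cancellation `j`. -/
noncomputable def Qs (c : FreeGroup S) : Finset (FreeGroup S) :=
  f.coeff.support.filter fun a =>
    a⁻¹ * c ∈ g.coeff.support ∧ len (a⁻¹ * c) = m ∧ canc a (a⁻¹ * c) = j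

/-- Right factors contributing to `(f * g).coeff c` with length `m` and cancellation `j`. -/
noncomputable def Rs (c : FreeGroup S) : Finset (FreeGroup S) :=
  g.coeff.support.filter fun b =>
    c * b⁻¹ ∈ f.coeff.support ∧ len b = m ∧ canc (c * b⁻¹) b = j

/-- The piece of the convolution with parameters `(m, j)`. -/
noncomputable def Hmj (c : FreeGroup S) : ℂ :=
  ∑ a ∈ Qs f g m j c, f.coeff a * g.coeff (a⁻¹ * c)

variable {f g m j}

lemma sum_Rs_eq (c : FreeGroup S) :
    ∑ a ∈ Qs f g m j c, ‖g.coeff (a⁻¹ * c)‖ ^ 2 = ∑ b ∈ Rs f g m j c, ‖g.coeff b‖ ^ 2 := by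
  refine Finset.sum_nbij' (fun a => a⁻¹ * c) (fun b => c * b⁻¹) ?_ ?_ ?_ ?_ ?_
  · intro a ha
    simp only [Qs, Finset.mem_filter] at ha
    simp only [Rs, Finset.mem_filter]
    refine ⟨ha.2.1, ?_, ha.2.2.1, ?_⟩
    · rw [aux3]; exact ha.1
    · rw [aux3]; exact ha.2.2.2
  · intro b hb
    simp only [Rs, Finset.mem_filter] at hb
    simp only [Qs, Finset.mem_filter]
    refine ⟨hb.2.1, ?_, ?_, ?_⟩
    · rw [aux4]; exact hb.1
    · rw [aux4]; exact hb.2.2.1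
    · rw [aux4]; exact hb.2.2.2
  · intro a _; exact aux3 a c
  · intro b _; exact aux4 b c
  · intro a _; rfl

/-- Decomposition of the convolution into pieces. -/
lemma mul_apply_eq_sum_Hmj {M : ℕ} (hM : ∀ b ∈ g.coeff.support, len b ≤ M) (c : FreeGroup S) :
    (f * g).coeff c = ∑ mj ∈ Finset.range (M + 1) ×ˢ Finset.range (M + 1),
      Hmj f g mj.1 mj.2 c := by
  have step1 : (f * g).coeff c =
      ∑ a ∈ f.coeff.support.filter (fun a => a⁻¹ * c ∈ g.coeff.support), f.coeff a * g.coeff (a⁻¹ * c) := by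
    rw [MonoidAlgebra.mul_apply, Finsupp.sum]
    rw [Finset.sum_filter]
    refine Finset.sum_congr rfl fun a _ => ?_
    rw [Finsupp.sum]
    have : ∀ b : FreeGroup S, (a * b = c) ↔ (b = a⁻¹ * c) := by
      intro b
      constructor
      · intro h; rw [← h]; group
      · intro h; rw [h]; exact aux1 a c
    calc (∑ b ∈ g.coeff.support, if a * b = c then f.coeff a * g.coeff b else 0)
        = ∑ b ∈ g.coeff.support, if b = a⁻¹ * c then f.coeff a * g.coeff b else 0 := by
          refine Finset.sum_congr rfl fun b _ => ?_
          simp only [this]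
      _ = if a⁻¹ * c ∈ g.coeff.support then f.coeff a * g.coeff (a⁻¹ * c) else 0 :=
          Finset.sum_ite_eq' _ _ _
  rw [step1]
  rw [← Finset.sum_fiberwise_of_maps_to
    (g := fun a => (len (a⁻¹ * c), canc a (a⁻¹ * c)))
    (t := Finset.range (M + 1) ×ˢ Finset.range (M + 1)) ?_ (fun a => f.coeff a * g.coeff (a⁻¹ * c))]
  · refine Finset.sum_congr rfl fun mj _ => ?_
    refine Finset.sum_congr ?_ fun a _ => rfl
    ext a
    simp only [Qs, Finset.mem_filter, Prod.ext_iff]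
    tauto
  · intro a ha
    rw [Finset.mem_filter] at ha
    have h1 : len (a⁻¹ * c) ≤ M := hM _ ha.2
    have h2 : canc a (a⁻¹ * c) ≤ len (a⁻¹ * c) := canc_le_len_right _ _
    simp only [Finset.mem_product, Finset.mem_range]
    omega

lemma Qs_empty (h : m < j) (c : FreeGroup S) : Qs f g m j c = ∅ := by
  rw [Finset.eq_empty_iff_forall_notMem]
  intro a ha
  simp only [Qs, Finset.mem_filter] at ha
  have := canc_le_len_right a (a⁻¹ * c)
  omega

end Convolution

/-- Partial sums of the Basel series are bounded by 2. -/
lemma basel (n : ℕ) : ∑ m ∈ Finset.range n, ((1 : ℝ) / (m + 1)) ^ 2 ≤ 2 := by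
  have key : ∀ k : ℕ, ∑ m ∈ Finset.range k, ((1 : ℝ) / (m + 1)) ^ 2
      ≤ 2 - 2 / ((k : ℝ) + 1) := by
    intro k
    induction k with
    | zero => norm_num
    | succ k ih =>
      rw [Finset.sum_range_succ]
      have hk1 : (0 : ℝ) < (k : ℝ) + 1 := by positivity
      have hk2 : (0 : ℝ) < (k : ℝ) + 2 := by positivity
      have key2 : ((1 : ℝ) / ((k : ℝ) + 1)) ^ 2
          ≤ 2 / ((k : ℝ) + 1) - 2 / ((k : ℝ) + 2) := by
        rw [div_pow, one_pow, div_sub_div _ _ hk1.ne' hk2.ne',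
          div_le_div_iff₀ (by positivity) (by positivity)]
        nlinarith [sq_nonneg ((k : ℝ) + 1)]
      push_cast
      have h3 : (k : ℝ) + 1 + 1 = (k : ℝ) + 2 := by ring
      rw [h3]
      linarith
  have h2 : (0 : ℝ) ≤ 2 / ((n : ℝ) + 1) := by positivity
  linarith [key n]

end FreeGroupRD

namespace FreeGroupRD

variable {S : Type*} [DecidableEq S]

lemma mem_Qs {f g : MonoidAlgebra ℂ (FreeGroup S)} {m j : ℕ} {c a : FreeGroup S} :
    a ∈ Qs f g m j c ↔ a ∈ f.coeff.support ∧ a⁻¹ * c ∈ g.coeff.support ∧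
      len (a⁻¹ * c) = m ∧ canc a (a⁻¹ * c) = j := by
  simp [Qs, Finset.mem_filter]

lemma mem_Rs {f g : MonoidAlgebra ℂ (FreeGroup S)} {m j : ℕ} {c b : FreeGroup S} :
    b ∈ Rs f g m j c ↔ b ∈ g.coeff.support ∧ c * b⁻¹ ∈ f.coeff.support ∧
      len b = m ∧ canc (c * b⁻¹) b = j := by
  simp [Rs, Finset.mem_filter]

lemma uniq_c {m j : ℕ} {a b c₁ c₂ : FreeGroup S}
    (h1 : len (a⁻¹ * c₁) = m) (h2 : canc a (a⁻¹ * c₁) = j)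
    (h3 : len b = m) (h4 : canc (c₁ * b⁻¹) b = j)
    (h5 : len (a⁻¹ * c₂) = m) (h6 : canc a (a⁻¹ * c₂) = j)
    (h7 : canc (c₂ * b⁻¹) b = j) : c₁ = c₂ := by
  have e1 := eq_mk_parts (aux1 a c₁) (aux2 b c₁) (h1.trans h3.symm) h2 h4
  have e2 := eq_mk_parts (aux1 a c₂) (aux2 b c₂) (h5.trans h3.symm) h6 h7
  rw [e1, e2]

/-- The key ℓ²-bound for a single piece of the convolution. -/
lemma key_bound (f g : MonoidAlgebra ℂ (FreeGroup S)) (m j : ℕ) :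
    ∑ c ∈ (f * g).coeff.support, ‖Hmj f g m j c‖ ^ 2 ≤
      (∑ a ∈ f.coeff.support, ‖f.coeff a‖ ^ 2) *
        (∑ b ∈ g.coeff.support.filter (fun b => len b = m), ‖g.coeff b‖ ^ 2) := by
  have hHc : ∀ c : FreeGroup S, ‖Hmj f g m j c‖ ^ 2 ≤
      (∑ a ∈ Qs f g m j c, ‖f.coeff a‖ ^ 2) * (∑ b ∈ Rs f g m j c, ‖g.coeff b‖ ^ 2) := by
    intro c
    have h1 : ‖Hmj f g m j c‖ ≤ ∑ a ∈ Qs f g m j c, ‖f.coeff a‖ * ‖g.coeff (a⁻¹ * c)‖ := by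
      refine (norm_sum_le _ _).trans (le_of_eq ?_)
      exact Finset.sum_congr rfl fun a _ => norm_mul _ _
    have h2 : ‖Hmj f g m j c‖ ^ 2 ≤
        (∑ a ∈ Qs f g m j c, ‖f.coeff a‖ * ‖g.coeff (a⁻¹ * c)‖) ^ 2 :=
      pow_le_pow_left₀ (norm_nonneg _) h1 2
    refine h2.trans ?_
    rw [← sum_Rs_eq c]
    exact Finset.sum_mul_sq_le_sq_mul_sq _ _ _
  refine (Finset.sum_le_sum fun c _ => hHc c).trans ?_
  have expand : ∀ c : FreeGroup S,
      (∑ a ∈ Qs f g m j c, ‖f.coeff a‖ ^ 2) * (∑ b ∈ Rs f g m j c, ‖g.coeff b‖ ^ 2)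
      = ∑ a ∈ f.coeff.support, ∑ b ∈ g.coeff.support,
          if (a⁻¹ * c ∈ g.coeff.support ∧ len (a⁻¹ * c) = m ∧ canc a (a⁻¹ * c) = j) ∧
             (c * b⁻¹ ∈ f.coeff.support ∧ len b = m ∧ canc (c * b⁻¹) b = j)
          then ‖f.coeff a‖ ^ 2 * ‖g.coeff b‖ ^ 2 else 0 := by
    intro c
    rw [Qs, Rs, Finset.sum_filter, Finset.sum_filter, Finset.sum_mul_sum]
    exact Finset.sum_congr rfl fun a _ => Finset.sum_congr rfl fun b _ =>
      ite_zero_mul_ite_zero _ _ _ _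
  calc ∑ c ∈ (f * g).coeff.support,
        (∑ a ∈ Qs f g m j c, ‖f.coeff a‖ ^ 2) * (∑ b ∈ Rs f g m j c, ‖g.coeff b‖ ^ 2)
      = ∑ a ∈ f.coeff.support, ∑ b ∈ g.coeff.support, ∑ c ∈ (f * g).coeff.support,
          (if (a⁻¹ * c ∈ g.coeff.support ∧ len (a⁻¹ * c) = m ∧ canc a (a⁻¹ * c) = j) ∧
              (c * b⁻¹ ∈ f.coeff.support ∧ len b = m ∧ canc (c * b⁻¹) b = j)
           then ‖f.coeff a‖ ^ 2 * ‖g.coeff b‖ ^ 2 else 0) := by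
        rw [show (∑ c ∈ (f * g).coeff.support,
            (∑ a ∈ Qs f g m j c, ‖f.coeff a‖ ^ 2) * (∑ b ∈ Rs f g m j c, ‖g.coeff b‖ ^ 2))
          = ∑ c ∈ (f * g).coeff.support, ∑ a ∈ f.coeff.support, ∑ b ∈ g.coeff.support, _
          from Finset.sum_congr rfl fun c _ => expand c]
        rw [Finset.sum_comm]
        exact Finset.sum_congr rfl fun a _ => Finset.sum_comm
    _ ≤ ∑ a ∈ f.coeff.support, ∑ b ∈ g.coeff.support,
          (if len b = m then ‖f.coeff a‖ ^ 2 * ‖g.coeff b‖ ^ 2 else 0) := by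
        refine Finset.sum_le_sum fun a _ => Finset.sum_le_sum fun b _ => ?_
        by_cases hbm : len b = m
        · rw [if_pos hbm]
          have hcard : ((f * g).coeff.support.filter (fun c =>
              (a⁻¹ * c ∈ g.coeff.support ∧ len (a⁻¹ * c) = m ∧ canc a (a⁻¹ * c) = j) ∧
              (c * b⁻¹ ∈ f.coeff.support ∧ len b = m ∧ canc (c * b⁻¹) b = j))).card ≤ 1 := by
            refine Finset.card_le_one.mpr fun c₁ h₁ c₂ h₂ => ?_
            rw [Finset.mem_filter] at h₁ h₂
            exact uniq_c h₁.2.1.2.1 h₁.2.1.2.2 hbm h₁.2.2.2.2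
              h₂.2.1.2.1 h₂.2.1.2.2 h₂.2.2.2.2
          calc (∑ c ∈ (f * g).coeff.support, _)
              = ∑ c ∈ (f * g).coeff.support.filter _, ‖f.coeff a‖ ^ 2 * ‖g.coeff b‖ ^ 2 :=
                (Finset.sum_filter _ _).symm
            _ = _ • (‖f.coeff a‖ ^ 2 * ‖g.coeff b‖ ^ 2) := Finset.sum_const _
            _ ≤ ‖f.coeff a‖ ^ 2 * ‖g.coeff b‖ ^ 2 := by
                rw [nsmul_eq_mul]
                calc _ ≤ (1 : ℝ) * (‖f.coeff a‖ ^ 2 * ‖g.coeff b‖ ^ 2) := by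
                      apply mul_le_mul_of_nonneg_right _ (by positivity)
                      exact_mod_cast hcard
                  _ = _ := one_mul _
        · rw [if_neg hbm]
          refine le_of_eq (Finset.sum_eq_zero fun c _ => if_neg ?_)
          rintro ⟨_, hpB⟩
          exact hbm hpB.2.1
    _ = (∑ a ∈ f.coeff.support, ‖f.coeff a‖ ^ 2) *
          (∑ b ∈ g.coeff.support.filter (fun b => len b = m), ‖g.coeff b‖ ^ 2) := by
        rw [Finset.sum_mul]
        refine Finset.sum_congr rfl fun a _ => ?_
        rw [Finset.sum_filter, Finset.mul_sum]
        refine Finset.sum_congr rfl fun b _ => ?_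
        rw [mul_ite, mul_zero]

/-- Triangle inequality in ℓ² for the decomposition of the convolution. -/
lemma l2norm_mul_le (f g : MonoidAlgebra ℂ (FreeGroup S)) {M : ℕ}
    (hM : ∀ b ∈ g.coeff.support, len b ≤ M) :
    l2norm (f * g) ≤ ∑ mj ∈ Finset.range (M + 1) ×ˢ Finset.range (M + 1),
      Real.sqrt (∑ c ∈ (f * g).coeff.support, ‖Hmj f g mj.1 mj.2 c‖ ^ 2) := by
  classical
  set T := (f * g).coeff.support with hT
  let V : ℕ × ℕ → EuclideanSpace ℂ {x // x ∈ T} := fun mj => WithLp.toLp 2 (fun c => Hmj f g mj.1 mj.2 c.1)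
  have hVtot : (fun c : {x // x ∈ T} => (f * g).coeff c.1) =
      ∑ mj ∈ Finset.range (M + 1) ×ˢ Finset.range (M + 1), V mj := by
    funext c
    rw [WithLp.ofLp_sum, Finset.sum_apply]
    exact mul_apply_eq_sum_Hmj hM c.1
  have h1 : l2norm (f * g) =
      ‖(∑ mj ∈ Finset.range (M + 1) ×ˢ Finset.range (M + 1), V mj :
        EuclideanSpace ℂ {x // x ∈ T})‖ := by
    rw [l2norm, EuclideanSpace.norm_eq, ← hVtot]
    congr 1
    rw [← Finset.sum_coe_sort T (fun c => ‖(f * g).coeff c‖ ^ 2)]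
  rw [h1]
  refine (norm_sum_le _ _).trans (le_of_eq ?_)
  refine Finset.sum_congr rfl fun mj _ => ?_
  rw [EuclideanSpace.norm_eq]
  congr 1
  rw [← Finset.sum_coe_sort T (fun c => ‖Hmj f g mj.1 mj.2 c‖ ^ 2)]

end FreeGroupRD

open FreeGroupRD in
/-- Property (RD) for the free group on a set `S`, with respect to the reduced
word length function. -/
theorem property_RD_free_group {S : Type*} [DecidableEq S] :
    ∃ C : ℝ, 0 < C ∧ ∃ s : ℝ, 0 ≤ s ∧ ∀ f g : MonoidAlgebra ℂ (FreeGroup S),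
      l2norm (f * g) ≤ C * l2norm f *
        Real.sqrt (∑ c ∈ g.coeff.support, ‖g.coeff c‖ ^ 2 *
          (1 + ((FreeGroup.toWord c).length : ℝ)) ^ (2 * s)) := by
  refine ⟨Real.sqrt 2, Real.sqrt_pos.mpr (by norm_num), 2, by norm_num, fun f g => ?_⟩
  classical
  set M : ℕ := g.coeff.support.sup len with hMdef
  have hM : ∀ b ∈ g.coeff.support, len b ≤ M := fun b hb => Finset.le_sup hb
  set G : ℕ → ℝ := fun m => ∑ b ∈ g.coeff.support.filter (fun b => len b = m), ‖g.coeff b‖ ^ 2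
    with hGdef
  have hGnn : ∀ m, 0 ≤ G m := fun m => Finset.sum_nonneg fun _ _ => by positivity
  have hl2f : 0 ≤ l2norm f := Real.sqrt_nonneg _
  set W : ℝ := ∑ m ∈ Finset.range (M + 1), ((m : ℝ) + 1) ^ 4 * G m with hWdef
  have hWnn : 0 ≤ W := Finset.sum_nonneg fun m _ => by
    have := hGnn m; positivity
  -- Cauchy–Schwarz in `m`
  have hCS : ∑ m ∈ Finset.range (M + 1), ((m : ℝ) + 1) * Real.sqrt (G m) ≤
      Real.sqrt 2 * Real.sqrt W := by
    have h := Finset.sum_mul_sq_le_sq_mul_sq (Finset.range (M + 1))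
      (fun m => 1 / ((m : ℝ) + 1)) (fun m => ((m : ℝ) + 1) ^ 2 * Real.sqrt (G m))
    have e1 : ∑ m ∈ Finset.range (M + 1),
        (1 / ((m : ℝ) + 1)) * (((m : ℝ) + 1) ^ 2 * Real.sqrt (G m)) =
        ∑ m ∈ Finset.range (M + 1), ((m : ℝ) + 1) * Real.sqrt (G m) := by
      refine Finset.sum_congr rfl fun m _ => ?_
      have h0 : ((m : ℝ) + 1) ≠ 0 := by positivity
      field_simp
    have e2 : ∑ m ∈ Finset.range (M + 1),
        (((m : ℝ) + 1) ^ 2 * Real.sqrt (G m)) ^ 2 = W := by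
      refine Finset.sum_congr rfl fun m _ => ?_
      rw [mul_pow, ← pow_mul, Real.sq_sqrt (hGnn m)]
    rw [e1, e2] at h
    have h2 : (∑ m ∈ Finset.range (M + 1), ((m : ℝ) + 1) * Real.sqrt (G m)) ^ 2 ≤
        2 * W := by
      refine h.trans ?_
      exact mul_le_mul_of_nonneg_right (basel (M + 1)) hWnn
    have hnn : 0 ≤ ∑ m ∈ Finset.range (M + 1), ((m : ℝ) + 1) * Real.sqrt (G m) :=
      Finset.sum_nonneg fun m _ => by positivity
    have := (Real.le_sqrt hnn (by positivity)).mpr h2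
    rwa [Real.sqrt_mul (by norm_num) W] at this
  -- identification of `W` with the weighted ℓ²-norm of `g`
  have hWeq : W = ∑ c ∈ g.coeff.support, ‖g.coeff c‖ ^ 2 *
      (1 + ((FreeGroup.toWord c).length : ℝ)) ^ (2 * (2 : ℝ)) := by
    have hpow : ∀ c : FreeGroup S, (1 + ((FreeGroup.toWord c).length : ℝ)) ^ (2 * (2 : ℝ)) =
        (1 + ((FreeGroup.toWord c).length : ℝ)) ^ (4 : ℕ) := by
      intro c
      have h4 : (2 * (2 : ℝ)) = ((4 : ℕ) : ℝ) := by norm_num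
      rw [h4, Real.rpow_natCast]
    calc W = ∑ c ∈ g.coeff.support, ‖g.coeff c‖ ^ 2 * (1 + ((FreeGroup.toWord c).length : ℝ)) ^ (4 : ℕ) := by
          rw [hWdef, ← Finset.sum_fiberwise_of_maps_to (g := len)
            (t := Finset.range (M + 1))
            (fun b hb => Finset.mem_range.mpr (Nat.lt_succ_of_le (hM b hb)))
            (fun c => ‖g.coeff c‖ ^ 2 * (1 + ((FreeGroup.toWord c).length : ℝ)) ^ (4 : ℕ))]
          refine Finset.sum_congr rfl fun m _ => ?_
          rw [hGdef, Finset.mul_sum]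
          refine Finset.sum_congr rfl fun b hb => ?_
          have hbm : len b = m := (Finset.mem_filter.mp hb).2
          have : ((FreeGroup.toWord b).length : ℝ) = (m : ℝ) := by
            rw [show (FreeGroup.toWord b).length = m from hbm]
          rw [this]
          ring
      _ = _ := Finset.sum_congr rfl fun c _ => by rw [hpow c]
  -- main chain of inequalities
  calc l2norm (f * g)
      ≤ ∑ mj ∈ Finset.range (M + 1) ×ˢ Finset.range (M + 1),
          Real.sqrt (∑ c ∈ (f * g).coeff.support, ‖Hmj f g mj.1 mj.2 c‖ ^ 2) :=
        l2norm_mul_le f g hM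
    _ ≤ ∑ m ∈ Finset.range (M + 1), ((m : ℝ) + 1) * (l2norm f * Real.sqrt (G m)) := by
        rw [Finset.sum_product]
        refine Finset.sum_le_sum fun m hm => ?_
        have hterm : ∀ j : ℕ,
            Real.sqrt (∑ c ∈ (f * g).coeff.support, ‖Hmj f g m j c‖ ^ 2) ≤
            (if j ≤ m then l2norm f * Real.sqrt (G m) else 0) := by
          intro j
          by_cases hj : j ≤ m
          · rw [if_pos hj]
            refine (Real.sqrt_le_sqrt (key_bound f g m j)).trans (le_of_eq ?_)
            rw [Real.sqrt_mul (by positivity), l2norm]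
          · rw [if_neg hj]
            have hQ : ∀ c : FreeGroup S, Hmj f g m j c = 0 := fun c => by
              rw [Hmj, Qs_empty (Nat.lt_of_not_le hj)]
              exact Finset.sum_empty
            refine le_of_eq ?_
            have : ∑ c ∈ (f * g).coeff.support, ‖Hmj f g m j c‖ ^ 2 = 0 :=
              Finset.sum_eq_zero fun c _ => by rw [hQ c]; simp
            rw [this, Real.sqrt_zero]
        calc ∑ j ∈ Finset.range (M + 1),
              Real.sqrt (∑ c ∈ (f * g).coeff.support, ‖Hmj f g m j c‖ ^ 2)
            ≤ ∑ j ∈ Finset.range (M + 1),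
              (if j ≤ m then l2norm f * Real.sqrt (G m) else 0) :=
              Finset.sum_le_sum fun j _ => hterm j
          _ = ∑ j ∈ (Finset.range (M + 1)).filter (fun j => j ≤ m),
              (l2norm f * Real.sqrt (G m)) := (Finset.sum_filter _ _).symm
          _ = ((m : ℝ) + 1) * (l2norm f * Real.sqrt (G m)) := by
              have hmM : m ≤ M := Nat.lt_succ_iff.mp (Finset.mem_range.mp hm)
              have hfil : (Finset.range (M + 1)).filter (fun j => j ≤ m) =
                  Finset.range (m + 1) := by
                ext x
                simp only [Finset.mem_filter, Finset.mem_range]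
                omega
              rw [hfil, Finset.sum_const, Finset.card_range, nsmul_eq_mul]
              push_cast
              ring
    _ = l2norm f * ∑ m ∈ Finset.range (M + 1), ((m : ℝ) + 1) * Real.sqrt (G m) := by
        rw [Finset.mul_sum]
        exact Finset.sum_congr rfl fun m _ => by ring
    _ ≤ l2norm f * (Real.sqrt 2 * Real.sqrt W) :=
        mul_le_mul_of_nonneg_left hCS hl2f
    _ = Real.sqrt 2 * l2norm f * Real.sqrt W := by ring
    _ = Real.sqrt 2 * l2norm f * Real.sqrt (∑ c ∈ g.coeff.support, ‖g.coeff c‖ ^ 2 *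
          (1 + ((FreeGroup.toWord c).length : ℝ)) ^ (2 * (2 : ℝ))) := by rw [hWeq]
end

section
/- Let T₁ and T₂ be trees with nonempty vertex sets V₁ and V₂, and let a : V₁×V₂ → V₁×V₂ be a shape-preserving bijection, i.e. sh(a·u, a·v) = sh(u,v) for all u, v ∈ V₁×V₂. Then there exist bijections a₁ : V₁ → V₁ and a₂ : V₂ → V₂ with d(a₁u, a₁u') = d(u,u') for all u, u' ∈ V₁ and d(a₂v, a₂v') = d(v,v') for all v, v' ∈ V₂, such that a·(u,v) = (a₁u, a₂v) for all (u,v) ∈ V₁×V₂. -/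
/-- Every shape-preserving bijection of the vertex set of a product of two
(nonempty) trees is a Cartesian product of distance-preserving bijections of the
two factors. -/
theorem shape_preserving_bijection_is_product {V₁ V₂ : Type*}
    [Nonempty V₁] [Nonempty V₂]
    (T₁ : SimpleGraph V₁) (T₂ : SimpleGraph V₂)
    (hT₁ : T₁.IsTree) (hT₂ : T₂.IsTree)
    (a : V₁ × V₂ → V₁ × V₂) (ha : Function.Bijective a)
    (hsh : ∀ u v : V₁ × V₂, shape T₁ T₂ (a u) (a v) = shape T₁ T₂ u v) :
    ∃ (a₁ : V₁ → V₁) (a₂ : V₂ → V₂),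
      Function.Bijective a₁ ∧ Function.Bijective a₂ ∧
      (∀ u u' : V₁, T₁.dist (a₁ u) (a₁ u') = T₁.dist u u') ∧
      (∀ v v' : V₂, T₂.dist (a₂ v) (a₂ v') = T₂.dist v v') ∧
      ∀ p : V₁ × V₂, a p = (a₁ p.1, a₂ p.2) := by
  have hc₁ := hT₁.isConnected
  have hc₂ := hT₂.isConnected
  have h1 : ∀ u v : V₁ × V₂, T₁.dist (a u).1 (a v).1 = T₁.dist u.1 v.1 := fun u v =>
    congrArg Prod.fst (hsh u v)
  have h2 : ∀ u v : V₁ × V₂, T₂.dist (a u).2 (a v).2 = T₂.dist u.2 v.2 := fun u v =>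
    congrArg Prod.snd (hsh u v)
  obtain ⟨u₀⟩ := ‹Nonempty V₁›
  obtain ⟨v₀⟩ := ‹Nonempty V₂›
  set a₁ : V₁ → V₁ := fun u => (a (u, v₀)).1 with ha₁
  set a₂ : V₂ → V₂ := fun v => (a (u₀, v)).2 with ha₂
  have hd₁ : ∀ u u' : V₁, T₁.dist (a₁ u) (a₁ u') = T₁.dist u u' := fun u u' =>
    h1 (u, v₀) (u', v₀)
  have hd₂ : ∀ v v' : V₂, T₂.dist (a₂ v) (a₂ v') = T₂.dist v v' := fun v v' =>
    h2 (u₀, v) (u₀, v')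
  have hprod : ∀ p : V₁ × V₂, a p = (a₁ p.1, a₂ p.2) := by
    intro ⟨u, v⟩
    have e1 : T₁.dist (a (u, v)).1 (a₁ u) = 0 := by
      have := h1 (u, v) (u, v₀); rwa [SimpleGraph.dist_self] at this
    have e2 : T₂.dist (a (u, v)).2 (a₂ v) = 0 := by
      have := h2 (u, v) (u₀, v); rwa [SimpleGraph.dist_self] at this
    have q1 := hc₁.dist_eq_zero_iff.mp e1
    have q2 := hc₂.dist_eq_zero_iff.mp e2
    exact Prod.ext q1 q2
  refine ⟨a₁, a₂, ?_, ?_, hd₁, hd₂, hprod⟩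
  · constructor
    · intro u u' h
      have : T₁.dist u u' = 0 := by rw [← hd₁, h, SimpleGraph.dist_self]
      exact hc₁.dist_eq_zero_iff.mp this
    · intro w
      obtain ⟨p, hp⟩ := ha.2 (w, a₂ v₀)
      exact ⟨p.1, by have := hprod p; rw [hp] at this; exact (congrArg Prod.fst this).symm⟩
  · constructor
    · intro v v' h
      have : T₂.dist v v' = 0 := by rw [← hd₂, h, SimpleGraph.dist_self]
      exact hc₂.dist_eq_zero_iff.mp this
    · intro w
      obtain ⟨p, hp⟩ := ha.2 (a₁ u₀, w)
      exact ⟨p.2, by have := hprod p; rw [hp] at this; exact (congrArg Prod.snd this).symm⟩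
end

section
/- Let T₁ and T₂ be trees with vertex sets V₁ and V₂, and let Γ be an Ã₁×Ã₁ group, i.e. a group of shape-preserving bijections of V₁×V₂ acting simply transitively on V₁×V₂. Fix a vertex v₀ ∈ V₁×V₂, define sh(c) = sh(v₀, c·v₀) for c ∈ Γ, and set N₁ = {a ∈ Γ : sh(a) = (1,0)} and N₂ = {b ∈ Γ : sh(b) = (0,1)}. Then every element c ∈ Γ with sh(c) = (m,n) can be written as c = a₁⋯a_m·b₁⋯b_n with a₁,…,a_m ∈ N₁ and b₁,…,b_n ∈ N₂, and the factors a₁,…,a_m, b₁,…,b_n in such an expression are uniquely determined by c. -/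
section Aux

open SimpleGraph

/-- One step along a geodesic: if `d(u,v) = m+1`, there is a vertex at distance 1 from `u`
and distance `m` from `v`. -/
lemma A1xA1.step_exists {V : Type*} {T : SimpleGraph V} (hconn : T.Connected) {u v : V} {m : ℕ}
    (h : T.dist u v = m + 1) : ∃ x : V, T.dist u x = 1 ∧ T.dist x v = m := by
  obtain ⟨p, hp⟩ := hconn.exists_walk_length_eq_dist u v
  rw [h] at hp
  cases p with
  | nil => simp at hp
  | @cons _ x _ hadj q =>
    refine ⟨x, (dist_eq_one_iff_adj).2 hadj, le_antisymm ?_ ?_⟩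
    · have := dist_le q
      rw [Walk.length_cons] at hp
      omega
    · have htri := hconn.dist_triangle (u := u) (v := x) (w := v)
      rw [h, (dist_eq_one_iff_adj).2 hadj] at htri
      omega

/-- In a tree, the vertex at distance 1 from `u` and distance `m` from `v` (with
`d(u,v) = m+1`) is unique. -/
lemma A1xA1.step_unique {V : Type*} {T : SimpleGraph V} (hT : T.IsTree) {u v x x' : V} {m : ℕ}
    (huv : T.dist u v = m + 1)
    (hx1 : T.dist u x = 1) (hx2 : T.dist x v = m)
    (hx1' : T.dist u x' = 1) (hx2' : T.dist x' v = m) : x = x' := by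
  have hconn := hT.isConnected
  obtain ⟨q, hq⟩ := hconn.exists_walk_length_eq_dist u x
  obtain ⟨r, hr⟩ := hconn.exists_walk_length_eq_dist x v
  obtain ⟨q', hq'⟩ := hconn.exists_walk_length_eq_dist u x'
  obtain ⟨r', hr'⟩ := hconn.exists_walk_length_eq_dist x' v
  have hs : (q.append r).length = T.dist u v := by
    rw [Walk.length_append, hq, hr, hx1, hx2, huv]; omega
  have hs' : (q'.append r').length = T.dist u v := by
    rw [Walk.length_append, hq', hr', hx1', hx2', huv]; omega
  have heq : q.append r = q'.append r' :=
    (hT.existsUnique_path u v).unique ((q.append r).isPath_of_length_eq_dist hs)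
      ((q'.append r').isPath_of_length_eq_dist hs')
  have h1 : (q.append r).getVert 1 = x := by
    rw [Walk.getVert_append]
    rw [hq, hx1]
    simp
  have h1' : (q'.append r').getVert 1 = x' := by
    rw [Walk.getVert_append]
    rw [hq', hx1']
    simp
  rw [← h1, ← h1', heq]

/-- Subadditivity of a projected distance along a product of group elements. -/
lemma A1xA1.list_bound {V : Type*} {T : SimpleGraph V} (hconn : T.Connected)
    {Γ : Type*} [Group Γ] {X : Type*} [MulAction Γ X] (π : X → V) (v₀ : X)
    (hinv : ∀ g h : Γ, T.dist (π (g • v₀)) (π ((g * h) • v₀)) = T.dist (π v₀) (π (h • v₀))) :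
    ∀ l : List Γ, T.dist (π v₀) (π (l.prod • v₀)) ≤
      (l.map fun g => T.dist (π v₀) (π (g • v₀))).sum := by
  intro l
  induction l with
  | nil => simp
  | cons g t ih =>
    have htri := hconn.dist_triangle (u := π v₀) (v := π (g • v₀))
      (w := π ((g * t.prod) • v₀))
    rw [hinv g t.prod] at htri
    simp only [List.prod_cons, List.map_cons, List.sum_cons]
    omega

lemma A1xA1.sum_map_const {α : Type*} (f : α → ℕ) (k : ℕ) :
    ∀ l : List α, (∀ x ∈ l, f x = k) → (l.map f).sum = l.length * k := by
  intro l
  induction l with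
  | nil => simp
  | cons x t ih =>
    intro h
    simp only [List.map_cons, List.sum_cons, List.length_cons, h x (by simp)]
    rw [ih (fun y hy => h y (by simp [hy]))]
    ring

end Aux

/-- In an `Ã₁×Ã₁` group `Γ` (a group of shape-preserving bijections acting simply
transitively on the vertices of a product of two trees), every element `c` of
shape `(m,n)` has a unique reduced expression `c = a₁ ⋯ a_m b₁ ⋯ b_n` with each
`aᵢ` of shape `(1,0)` and each `bᵢ` of shape `(0,1)`. -/
theorem unique_reduced_expression_A1xA1 {V₁ V₂ : Type*}
    (T₁ : SimpleGraph V₁) (T₂ : SimpleGraph V₂)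
    (hT₁ : T₁.IsTree) (hT₂ : T₂.IsTree)
    {Γ : Type*} [Group Γ] [MulAction Γ (V₁ × V₂)]
    (hsh : ∀ (c : Γ) (u v : V₁ × V₂), shape T₁ T₂ (c • u) (c • v) = shape T₁ T₂ u v)
    (hst : ∀ x y : V₁ × V₂, ∃! c : Γ, c • x = y)
    (v₀ : V₁ × V₂) (m n : ℕ) (c : Γ)
    (hc : shape T₁ T₂ v₀ (c • v₀) = (m, n)) :
    ∃! p : List Γ × List Γ,
      p.1.length = m ∧ p.2.length = n ∧
      (∀ a ∈ p.1, shape T₁ T₂ v₀ (a • v₀) = (1, 0)) ∧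
      (∀ b ∈ p.2, shape T₁ T₂ v₀ (b • v₀) = (0, 1)) ∧
      (p.1 ++ p.2).prod = c := by
  have hconn₁ := hT₁.isConnected
  have hconn₂ := hT₂.isConnected
  -- shape components
  have hshape_eq : ∀ (g : Γ) (p q : ℕ), shape T₁ T₂ v₀ (g • v₀) = (p, q) ↔
      T₁.dist v₀.1 ((g • v₀).1) = p ∧ T₂.dist v₀.2 ((g • v₀).2) = q := by
    intro g p q
    simp [shape, Prod.ext_iff]
  -- invariance for projections
  have hinv1 : ∀ g h : Γ, T₁.dist ((g • v₀).1) (((g * h) • v₀).1) =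
      T₁.dist v₀.1 ((h • v₀).1) := by
    intro g h
    have := congrArg Prod.fst (hsh g v₀ (h • v₀))
    simpa [shape, mul_smul] using this
  have hinv2 : ∀ g h : Γ, T₂.dist ((g • v₀).2) (((g * h) • v₀).2) =
      T₂.dist v₀.2 ((h • v₀).2) := by
    intro g h
    have := congrArg Prod.snd (hsh g v₀ (h • v₀))
    simpa [shape, mul_smul] using this
  have hb1 := A1xA1.list_bound hconn₁ (Prod.fst : V₁ × V₂ → V₁) v₀ hinv1
  have hb2 := A1xA1.list_bound hconn₂ (Prod.snd : V₁ × V₂ → V₂) v₀ hinv2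
  -- bounds for products of lists of the relevant shapes
  have hbound : ∀ (A B : List Γ), (∀ a ∈ A, shape T₁ T₂ v₀ (a • v₀) = (1, 0)) →
      (∀ b ∈ B, shape T₁ T₂ v₀ (b • v₀) = (0, 1)) →
      T₁.dist v₀.1 (((A ++ B).prod • v₀).1) ≤ A.length ∧
      T₂.dist v₀.2 (((A ++ B).prod • v₀).2) ≤ B.length := by
    intro A B hA hB
    constructor
    · refine (hb1 (A ++ B)).trans ?_
      rw [List.map_append, List.sum_append]
      rw [A1xA1.sum_map_const _ 1 A (fun a ha => ((hshape_eq a 1 0).1 (hA a ha)).1),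
        A1xA1.sum_map_const _ 0 B (fun b hb => ((hshape_eq b 0 1).1 (hB b hb)).1)]
      omega
    · refine (hb2 (A ++ B)).trans ?_
      rw [List.map_append, List.sum_append]
      rw [A1xA1.sum_map_const _ 0 A (fun a ha => ((hshape_eq a 1 0).1 (hA a ha)).2),
        A1xA1.sum_map_const _ 1 B (fun b hb => ((hshape_eq b 0 1).1 (hB b hb)).2)]
      omega
  -- shift lemma
  have hshift : ∀ (a c : Γ), shape T₁ T₂ v₀ ((a⁻¹ * c) • v₀) =
      shape T₁ T₂ (a • v₀) (c • v₀) := by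
    intro a c
    have := hsh a v₀ ((a⁻¹ * c) • v₀)
    rw [smul_smul, mul_inv_cancel_left] at this
    exact this.symm
  -- main induction
  suffices H : ∀ (N m n : ℕ) (c : Γ), m + n ≤ N →
      shape T₁ T₂ v₀ (c • v₀) = (m, n) →
      ∃! p : List Γ × List Γ,
        p.1.length = m ∧ p.2.length = n ∧
        (∀ a ∈ p.1, shape T₁ T₂ v₀ (a • v₀) = (1, 0)) ∧
        (∀ b ∈ p.2, shape T₁ T₂ v₀ (b • v₀) = (0, 1)) ∧
        (p.1 ++ p.2).prod = c by
    exact H (m + n) m n c le_rfl hc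
  clear hc c m n
  intro N
  induction N with
  | zero =>
    intro m n c hmn hc
    obtain ⟨rfl, rfl⟩ : m = 0 ∧ n = 0 := by omega
    obtain ⟨h1, h2⟩ := (hshape_eq c 0 0).1 hc
    have hv : c • v₀ = v₀ := by
      ext
      · exact (hconn₁.dist_eq_zero_iff.1 h1).symm
      · exact (hconn₂.dist_eq_zero_iff.1 h2).symm
    have hc1 : c = 1 := (hst v₀ v₀).unique hv (one_smul _ _)
    refine ⟨([], []), ⟨rfl, rfl, by simp, by simp, by simp [hc1]⟩, ?_⟩
    rintro ⟨A, B⟩ ⟨hA, hB, -, -, -⟩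
    simp only [List.length_eq_zero_iff] at hA hB
    simp [hA, hB]
  | succ N ih =>
    intro m n c hmn hc
    by_cases hle : m + n ≤ N
    · exact ih m n c hle hc
    obtain ⟨hd1, hd2⟩ := (hshape_eq c m n).1 hc
    rcases m with - | m'
    · rcases n with - | n'
      · omega
      · -- m = 0, n = n' + 1
        obtain ⟨y, hy1, hy2⟩ := A1xA1.step_exists hconn₂ hd2
        have hc1 : (c • v₀).1 = v₀.1 := (hconn₁.dist_eq_zero_iff.1 hd1).symm
        obtain ⟨b, hb⟩ := (hst v₀ (v₀.1, y)).exists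
        have hbsh : shape T₁ T₂ v₀ (b • v₀) = (0, 1) := by
          rw [hshape_eq, hb]
          simpa using hy1
        have hrem : shape T₁ T₂ v₀ ((b⁻¹ * c) • v₀) = (0, n') := by
          rw [hshift, hb]
          simp only [shape, Prod.mk.injEq]
          exact ⟨by simp [hc1], by simpa using hy2⟩
        obtain ⟨⟨A, B⟩, ⟨hAl, hBl, hAs, hBs, hpr⟩, huniq⟩ := ih 0 n' (b⁻¹ * c) (by omega) hrem
        simp only [List.length_eq_zero_iff] at hAl
        subst hAl
        refine ⟨([], b :: B), ⟨rfl, by simpa using hBl, by simp, ?_, ?_⟩, ?_⟩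
        · intro x hx
          rcases List.mem_cons.1 hx with rfl | hx
          · exact hbsh
          · exact hBs x hx
        · simp only [List.nil_append, List.prod_cons]
          simp only [List.nil_append] at hpr
          rw [hpr, mul_inv_cancel_left]
        · rintro ⟨A', B'⟩ ⟨hA'l, hB'l, hA's, hB's, hpr'⟩
          simp only [List.length_eq_zero_iff] at hA'l
          subst hA'l
          rcases B' with - | ⟨b', B'⟩
          · simp at hB'l
          · -- identify b' with b
            have hb'sh := hB's b' (by simp)
            obtain ⟨hb'1, hb'2⟩ := (hshape_eq b' 0 1).1 hb'sh
            have hb'fst : (b' • v₀).1 = v₀.1 := (hconn₁.dist_eq_zero_iff.1 hb'1).symm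
            have hprod' : (([] : List Γ) ++ B').prod = b'⁻¹ * c := by
              simp only [List.nil_append, List.prod_cons] at hpr' ⊢
              rw [← hpr', inv_mul_cancel_left]
            have hy2' : T₂.dist ((b' • v₀).2) ((c • v₀).2) = n' := by
              have hub : T₂.dist v₀.2 (((b'⁻¹ * c) • v₀).2) ≤ n' := by
                have := (hbound [] B' (by simp) (fun x hx => hB's x (by simp [hx]))).2
                rw [hprod'] at this
                simpa [show B'.length = n' by simpa using hB'l] using this
              have heqd : T₂.dist ((b' • v₀).2) ((c • v₀).2) =
                  T₂.dist v₀.2 (((b'⁻¹ * c) • v₀).2) := by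
                have := hinv2 b' (b'⁻¹ * c)
                rwa [mul_inv_cancel_left] at this
              have htri := hconn₂.dist_triangle (u := v₀.2) (v := (b' • v₀).2)
                (w := (c • v₀).2)
              rw [hd2] at htri
              rw [hb'2] at htri
              omega
            have hyy : (b' • v₀).2 = y :=
              A1xA1.step_unique hT₂ hd2 hb'2 hy2' hy1 hy2
            have hb'v : b' • v₀ = (v₀.1, y) := by
              ext
              · exact hb'fst
              · exact hyy
            have hb'b : b' = b := (hst v₀ (v₀.1, y)).unique hb'v hb
            subst hb'b
            have := huniq ([], B') ⟨rfl, by simpa using hB'l,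
              by simp, fun x hx => hB's x (by simp [hx]), hprod'⟩
            simp only [Prod.mk.injEq] at this
            simp [this.2]
    · -- m = m' + 1
      obtain ⟨x, hx1, hx2⟩ := A1xA1.step_exists hconn₁ hd1
      obtain ⟨a, ha⟩ := (hst v₀ (x, v₀.2)).exists
      have hash : shape T₁ T₂ v₀ (a • v₀) = (1, 0) := by
        rw [hshape_eq, ha]
        simpa using hx1
      have hrem : shape T₁ T₂ v₀ ((a⁻¹ * c) • v₀) = (m', n) := by
        rw [hshift, ha]
        simp only [shape, Prod.mk.injEq]
        exact ⟨by simpa using hx2, by simpa using hd2⟩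
      obtain ⟨⟨A, B⟩, ⟨hAl, hBl, hAs, hBs, hpr⟩, huniq⟩ := ih m' n (a⁻¹ * c) (by omega) hrem
      refine ⟨(a :: A, B), ⟨by simpa using hAl, hBl, ?_, hBs, ?_⟩, ?_⟩
      · intro g hg
        rcases List.mem_cons.1 hg with rfl | hg
        · exact hash
        · exact hAs g hg
      · rw [List.cons_append, List.prod_cons, hpr, mul_inv_cancel_left]
      · rintro ⟨A', B'⟩ ⟨hA'l, hB'l, hA's, hB's, hpr'⟩
        rcases A' with - | ⟨a', A'⟩
        · simp at hA'l
        · have ha'sh := hA's a' (by simp)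
          obtain ⟨ha'1, ha'2⟩ := (hshape_eq a' 1 0).1 ha'sh
          have ha'snd : (a' • v₀).2 = v₀.2 := (hconn₂.dist_eq_zero_iff.1 ha'2).symm
          have hprod' : (A' ++ B').prod = a'⁻¹ * c := by
            rw [List.cons_append, List.prod_cons] at hpr'
            rw [← hpr', inv_mul_cancel_left]
          have hx2' : T₁.dist ((a' • v₀).1) ((c • v₀).1) = m' := by
            have hub : T₁.dist v₀.1 (((a'⁻¹ * c) • v₀).1) ≤ m' := by
              have := (hbound A' B' (fun g hg => hA's g (by simp [hg])) hB's).1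
              rw [hprod'] at this
              simpa [show A'.length = m' by simpa using hA'l] using this
            have heqd : T₁.dist ((a' • v₀).1) ((c • v₀).1) =
                T₁.dist v₀.1 (((a'⁻¹ * c) • v₀).1) := by
              have := hinv1 a' (a'⁻¹ * c)
              rwa [mul_inv_cancel_left] at this
            have htri := hconn₁.dist_triangle (u := v₀.1) (v := (a' • v₀).1)
              (w := (c • v₀).1)
            rw [hd1, ha'1] at htri
            omega
          have hxx : (a' • v₀).1 = x :=
            A1xA1.step_unique hT₁ hd1 ha'1 hx2' hx1 hx2
          have ha'v : a' • v₀ = (x, v₀.2) := by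
            ext
            · exact hxx
            · exact ha'snd
          have ha'a : a' = a := (hst v₀ (x, v₀.2)).unique ha'v ha
          subst ha'a
          have := huniq (A', B') ⟨by simpa using hA'l, hB'l,
            fun g hg => hA's g (by simp [hg]), hB's, hprod'⟩
          simp only [Prod.mk.injEq] at this
          simp [this.1, this.2]
end
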